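/- arXiv:2506.16230 — 3 statements merged into one kernel-verified Lean document; each statement's English description precedes it below -/
import Mathlib

section
/- Fix β ∈ (0,1) and let ρ_{1−β} be the tail-weighted risk measure associated with a weight function w. Let P and R be probability measures on ℝ that place no atom at their (1−β)-quantiles, so that P((v_{1−β}(P),∞)) = β and R((v_{1−β}(R),∞)) = β. If the β-tail conditional distributions of P and R coincide, i.e. P({z : z ≤ x} | {z : z > v_{1−β}(P)}) = R({z : z ≤ x} | {z : z > v_{1−β}(R)}) for every x ∈ ℝ, then ρ_{1−β}(P) = ρ_{1−β}(R). -/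
open MeasureTheory Filter Set
open scoped ENNReal NNReal Topology Classical

noncomputable section

/-- `f` is regularly varying at infinity with index `ρ`:
`f (t*x) / f t → x ^ ρ` as `t → ∞` for every `x > 0`.  Slowly varying means index `0`. -/
def RegVary (f : ℝ → ℝ) (ρ : ℝ) : Prop :=
  ∀ x : ℝ, 0 < x → Tendsto (fun t : ℝ => f (t * x) / f t) atTop (𝓝 (x ^ ρ))

/-- Value-at-Risk at level `1 - s`: `v_{1-s}(P) = inf {u | P((u,∞)) ≤ s}`. -/
def VaR (P : Measure ℝ) (s : ℝ) : ℝ :=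
  sInf {u : ℝ | P (Ioi u) ≤ ENNReal.ofReal s}

/-- `w` is a weight function with tail parameters `κ` and slowly varying `ℓ`:
nonnegative on `(0,1]`, integrates to one, and `w(t) ~ t^κ ℓ(1/t)` as `t → 0⁺`. -/
structure IsWeight (w : ℝ → ℝ) (κ : ℝ) (ℓ : ℝ → ℝ) : Prop where
  nonneg : ∀ t ∈ Ioc (0:ℝ) 1, 0 ≤ w t
  total : (∫ t in Ioc (0:ℝ) 1, w t) = 1
  kappa_gt : -1 < κ
  slow : RegVary ℓ 0
  asym : Tendsto (fun t : ℝ => w t / (t ^ κ * ℓ (1 / t))) (𝓝[>] (0:ℝ)) (𝓝 1)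

/-- Tail-weighted risk measure `ρ_{1-β}(P) = ∫₀¹ w(t) v_{1-βt}(P) dt`, `[0,∞]`-valued. -/
def tailRisk (w : ℝ → ℝ) (β : ℝ) (P : Measure ℝ) : ℝ≥0∞ :=
  ∫⁻ t in Ioc (0:ℝ) 1, ENNReal.ofReal (w t * VaR P (β * t))

/-- Worst-case risk over a set of measures. -/
def worstRisk (w : ℝ → ℝ) (β : ℝ) (S : Set (Measure ℝ)) : ℝ≥0∞ :=
  ⨆ P ∈ S, tailRisk w β P

/-- Worst-case Value-at-Risk over a set of measures. -/
def worstVaR (S : Set (Measure ℝ)) (s : ℝ) : ℝ :=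
  ⨆ P ∈ S, VaR P s

/-- Survival function `F̄_P(x) = P((x,∞))`. -/
def survival (P : Measure ℝ) (x : ℝ) : ℝ := (P (Ioi x)).toReal

/-- `P` is heavy-tailed with index `γ`: its survival function is `RV(-γ)`. -/
def HeavyTailed (P : Measure ℝ) (γ : ℝ) : Prop := RegVary (survival P) (-γ)

/-- Cumulative hazard `Λ_P(x) = - log P((x,∞))`. -/
def hazard (P : Measure ℝ) (x : ℝ) : ℝ := - Real.log (survival P x)

/-- `P` has Weibull-type tails with index `γ`: its cumulative hazard is `RV(γ)`. -/
def WeibullTailed (P : Measure ℝ) (γ : ℝ) : Prop := RegVary (hazard P) γ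

/-- Couplings of two measures on `ℝ`. -/
def Couplings (P R : Measure ℝ) : Set (Measure (ℝ × ℝ)) :=
  {π | π.map Prod.fst = P ∧ π.map Prod.snd = R}

/-- `p`-Wasserstein distance. -/
def Wdist (p : ℝ) (P R : Measure ℝ) : ℝ≥0∞ :=
  (⨅ π ∈ Couplings P R, ∫⁻ z : ℝ × ℝ, ENNReal.ofReal (|z.1 - z.2| ^ p) ∂π) ^ (1 / p)

/-- Wasserstein ball of radius `δ` around `P₀`. -/
def WBall (p δ : ℝ) (P₀ : Measure ℝ) : Set (Measure ℝ) :=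
  {P | IsProbabilityMeasure P ∧ Wdist p P P₀ ≤ ENNReal.ofReal δ}

/-- `φ`-divergence `D_φ(P,R)`, equal to `+∞` unless `P ≪ R`. -/
def phiDiv {α : Type*} [MeasurableSpace α] (φ : ℝ → ℝ) (P R : Measure α) : ℝ≥0∞ :=
  if P ≪ R then lintegral R (fun x => ENNReal.ofReal (φ (P.rnDeriv R x).toReal)) else ⊤

/-- `φ`-divergence ball of radius `δ` around `R`. -/
def phiBall {α : Type*} [MeasurableSpace α] (φ : ℝ → ℝ) (δ : ℝ) (R : Measure α) :
    Set (Measure α) :=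
  {P | IsProbabilityMeasure P ∧ phiDiv φ P R ≤ ENNReal.ofReal δ}

/-- The smoothness assumption on `φ`: twice differentiable, convex,
`φ(1) = φ'(1) = 0`, and `φ(x)/x → ∞`. -/
structure PhiSmooth (φ : ℝ → ℝ) : Prop where
  nonneg : ∀ x : ℝ, 0 ≤ x → 0 ≤ φ x
  diff1 : Differentiable ℝ φ
  diff2 : Differentiable ℝ (deriv φ)
  convex : ConvexOn ℝ (Ici 0) φ
  at_one : φ 1 = 0
  deriv_one : deriv φ 1 = 0
  superlinear : Tendsto (fun x : ℝ => φ x / x) atTop atTop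

/-- Conditional Value-at-Risk `C_{1-β}(P) = β⁻¹ ∫₀^β v_{1-s}(P) ds`. -/
def CVaR (β : ℝ) (P : Measure ℝ) : ℝ := β⁻¹ * ∫ s in Ioc (0:ℝ) β, VaR P s


/-- the tail-weighted risk measure is a β-tail risk measure:
if the β-tail conditional distributions of `P` and `R` coincide, then
`ρ_{1-β}(P) = ρ_{1-β}(R)`. -/
theorem tailRisk_eq_of_tail_cond_eq
    (w : ℝ → ℝ) (κ : ℝ) (ℓ : ℝ → ℝ) (hw : IsWeight w κ ℓ)
    (β : ℝ) (hβ : β ∈ Ioo (0:ℝ) 1)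
    (P R : Measure ℝ) [IsProbabilityMeasure P] [IsProbabilityMeasure R]
    (hPatom : P {VaR P β} = 0) (hRatom : R {VaR R β} = 0)
    (hPmass : P (Ioi (VaR P β)) = ENNReal.ofReal β)
    (hRmass : R (Ioi (VaR R β)) = ENNReal.ofReal β)
    (htail : ∀ x : ℝ,
      P (Iic x ∩ Ioi (VaR P β)) / P (Ioi (VaR P β)) =
        R (Iic x ∩ Ioi (VaR R β)) / R (Ioi (VaR R β))) :
    tailRisk w β P = tailRisk w β R := by
  have hβ0 : (0:ℝ) < β := hβ.1
  have hc0 : ENNReal.ofReal β ≠ 0 := by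
    simp only [ne_eq, ENNReal.ofReal_eq_zero, not_le]; linarith
  -- tail measures coincide
  have hfg : ∀ x, P (Iic x ∩ Ioi (VaR P β)) = R (Iic x ∩ Ioi (VaR R β)) := by
    intro x
    have h := htail x
    rw [hPmass, hRmass] at h
    have h2 := congrArg (· * ENNReal.ofReal β) h
    simpa [ENNReal.div_mul_cancel hc0 ENNReal.ofReal_ne_top] using h2
  -- a general characterization of the VaR-defining set via the tail measure
  have hgen : ∀ (Q : Measure ℝ) (v : ℝ), Q (Ioi v) = ENNReal.ofReal β →
      ∀ s ∈ Ioo (0:ℝ) β, ∀ u : ℝ,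
        (Q (Ioi u) ≤ ENNReal.ofReal s ↔
          ENNReal.ofReal β ≤ ENNReal.ofReal s + Q (Iic u ∩ Ioi v)) := by
    intro Q v hmass s hs u
    rcases le_or_gt v u with hvu | huv
    · have hsplit : ENNReal.ofReal β = Q (Iic u ∩ Ioi v) + Q (Ioi u) := by
        rw [← hmass, Iic_inter_Ioi,
          ← measure_union (Ioc_disjoint_Ioi le_rfl) measurableSet_Ioi,
          Ioc_union_Ioi_eq_Ioi hvu]
      have hfin : Q (Iic u ∩ Ioi v) ≠ ∞ := by
        intro htop
        rw [htop] at hsplit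
        simp at hsplit
      constructor
      · intro h
        rw [hsplit, add_comm (ENNReal.ofReal s)]
        exact add_le_add_right h _
      · intro h
        rw [hsplit, add_comm (ENNReal.ofReal s)] at h
        exact (ENNReal.add_le_add_iff_left hfin).mp h
    · have hempty : Iic u ∩ Ioi v = (∅ : Set ℝ) := by
        rw [Iic_inter_Ioi]
        exact Ioc_eq_empty (by exact not_lt.2 huv.le)
      have hlt : ENNReal.ofReal s < ENNReal.ofReal β :=
        (ENNReal.ofReal_lt_ofReal_iff hβ0).2 hs.2
      constructor
      · intro h
        exfalso
        have hm : Q (Ioi v) ≤ Q (Ioi u) := measure_mono (Ioi_subset_Ioi huv.le)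
        rw [hmass] at hm
        exact absurd (hm.trans h) (not_le.2 hlt)
      · intro h
        rw [hempty] at h
        simp only [measure_empty, add_zero] at h
        exact absurd h (not_le.2 hlt)
  -- VaR agree on (0, β)
  have key : ∀ s ∈ Ioo (0:ℝ) β, VaR P s = VaR R s := by
    intro s hs
    unfold VaR
    congr 1
    ext u
    simp only [mem_setOf_eq]
    rw [hgen P (VaR P β) hPmass s hs u, hgen R (VaR R β) hRmass s hs u, hfg u]
  -- conclude via a.e. equality of the integrands
  unfold tailRisk
  apply lintegral_congr_ae
  have hone : ∀ᵐ t : ℝ ∂(volume.restrict (Ioc (0:ℝ) 1)), t ≠ 1 := by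
    refine (ae_restrict_iff' measurableSet_Ioc).2 ?_
    have : (volume : Measure ℝ) {(1:ℝ)} = 0 := measure_singleton 1
    filter_upwards [compl_mem_ae_iff.2 this] with t ht _
    simpa using ht
  have hmem : ∀ᵐ t : ℝ ∂(volume.restrict (Ioc (0:ℝ) 1)), t ∈ Ioc (0:ℝ) 1 :=
    ae_restrict_mem measurableSet_Ioc
  filter_upwards [hone, hmem] with t ht1 htm
  have ht0 : 0 < t := htm.1
  have ht1' : t < 1 := lt_of_le_of_ne htm.2 ht1
  have hbt : β * t ∈ Ioo (0:ℝ) β := by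
    constructor
    · positivity
    · nlinarith
  rw [key (β * t) hbt]

end
end

section
/- Let ρ_{1−β} be the tail-weighted risk measure associated with a weight function w. Suppose the probability measure P on ℝ has Weibull-type tails with index γ > 0. Then there exists a slowly varying function ℓ₂ such that ρ_{1−β}(P) = (log(1/β))^{1/γ} ℓ₂(log(1/β)) as β → 0; equivalently, the function u ↦ u^{−1/γ} ρ_{1−e^{−u}}(P) is slowly varying at infinity. -/
open MeasureTheory Filter Set
open scoped ENNReal NNReal Topology Classical

noncomputable section

namespace TWR
variable {P : Measure ℝ} {γ : ℝ} {w : ℝ → ℝ} {κ : ℝ} {ℓ : ℝ → ℝ}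


variable {P : Measure ℝ} {γ : ℝ}

lemma survival_nonneg (P : Measure ℝ) (x : ℝ) : 0 ≤ survival P x := ENNReal.toReal_nonneg

lemma survival_le_one [IsProbabilityMeasure P] (x : ℝ) : survival P x ≤ 1 := by
  have h : P (Ioi x) ≤ 1 := prob_le_one
  simpa [survival] using ENNReal.toReal_le_of_le_ofReal one_pos.le (by simpa using h)

lemma survival_anti [IsProbabilityMeasure P] : Antitone (survival P) := by
  intro x y hxy
  have : P (Ioi y) ≤ P (Ioi x) := measure_mono (Ioi_subset_Ioi hxy)
  exact ENNReal.toReal_mono (measure_ne_top _ _) this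

lemma hazard_nonneg [IsProbabilityMeasure P] (x : ℝ) : 0 ≤ hazard P x := by
  have := Real.log_nonpos (survival_nonneg P x) (survival_le_one x)
  simp only [hazard]; linarith

lemma eventually_hazard_pos [IsProbabilityMeasure P] (hγ : 0 < γ) (hP : WeibullTailed P γ) :
    ∀ᶠ t in atTop, 0 < hazard P t := by
  have h1 := hP 1 one_pos
  simp only [mul_one, Real.one_rpow] at h1
  have : ∀ᶠ t in atTop, (1:ℝ)/2 < hazard P t / hazard P t :=
    h1.eventually (eventually_gt_nhds (by norm_num))
  filter_upwards [this] with t ht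
  rcases eq_or_ne (hazard P t) 0 with h | h
  · simp [h] at ht; linarith
  · exact lt_of_le_of_ne (hazard_nonneg t) (Ne.symm h)

lemma survival_pos [IsProbabilityMeasure P] (hγ : 0 < γ) (hP : WeibullTailed P γ) (x : ℝ) :
    0 < survival P x := by
  by_contra h
  push_neg at h
  have hx0 : survival P x = 0 := le_antisymm h (survival_nonneg P x)
  have : ∀ᶠ t in atTop, hazard P t = 0 := by
    filter_upwards [eventually_ge_atTop x] with t ht
    have : survival P t = 0 :=
      le_antisymm (hx0 ▸ survival_anti ht) (survival_nonneg P t)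
    simp [hazard, this]
  rcases ((eventually_hazard_pos hγ hP).and this).exists with ⟨t, h1, h2⟩
  rw [h2] at h1; exact lt_irrefl _ h1

lemma hazard_mono [IsProbabilityMeasure P] (hγ : 0 < γ) (hP : WeibullTailed P γ) :
    Monotone (hazard P) := by
  intro x y hxy
  have := Real.log_le_log (survival_pos hγ hP y) (survival_anti hxy)
  simp only [hazard]; linarith

lemma hazard_tendsto_atTop [IsProbabilityMeasure P] (hγ : 0 < γ) (hP : WeibullTailed P γ) :
    Tendsto (hazard P) atTop atTop := by
  refine tendsto_atTop_atTop_of_monotone (hazard_mono hγ hP) ?_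
  by_contra hb
  push_neg at hb
  obtain ⟨M, hM⟩ := hb
  have hbdd : BddAbove (Set.range (hazard P)) := ⟨M, by rintro _ ⟨t, rfl⟩; exact (hM t).le⟩
  have hlim : Tendsto (hazard P) atTop (𝓝 (⨆ t, hazard P t)) :=
    tendsto_atTop_ciSup (hazard_mono hγ hP) hbdd
  have hLpos : 0 < ⨆ t, hazard P t := by
    rcases (eventually_hazard_pos hγ hP).exists with ⟨t, ht⟩
    exact lt_of_lt_of_le ht (le_ciSup hbdd t)
  have h2 : Tendsto (fun t => hazard P (t * 2) / hazard P t) atTop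
      (𝓝 ((⨆ t, hazard P t) / (⨆ t, hazard P t))) := by
    exact (hlim.comp (tendsto_id.atTop_mul_const two_pos)).div hlim hLpos.ne'
  have h3 := hP 2 two_pos
  have := tendsto_nhds_unique h3 h2
  rw [div_self hLpos.ne'] at this
  have : (1:ℝ) < (2:ℝ) ^ γ := (Real.one_lt_rpow_iff_of_pos two_pos).2 (Or.inl ⟨one_lt_two, hγ⟩)
  simp_all

/-- `V y = VaR P (e^{-y})`. -/
def Vf (P : Measure ℝ) (y : ℝ) : ℝ := VaR P (Real.exp (-y))

lemma Vf_def (P : Measure ℝ) (y : ℝ) :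
    Vf P y = sInf {u : ℝ | P (Ioi u) ≤ ENNReal.ofReal (Real.exp (-y))} := rfl

lemma mem_Sy_iff [IsProbabilityMeasure P] (hγ : 0 < γ) (hP : WeibullTailed P γ) {u y : ℝ} :
    P (Ioi u) ≤ ENNReal.ofReal (Real.exp (-y)) ↔ y ≤ hazard P u := by
  have h0 : 0 < survival P u := survival_pos hγ hP u
  have h1 : P (Ioi u) = ENNReal.ofReal (survival P u) :=
    (ENNReal.ofReal_toReal (measure_ne_top _ _)).symm
  rw [h1, ENNReal.ofReal_le_ofReal_iff (Real.exp_pos _).le,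
    ← Real.log_le_iff_le_exp h0]
  constructor <;> intro h <;> simp only [hazard] at * <;> linarith

lemma Sy_nonempty [IsProbabilityMeasure P] (hγ : 0 < γ) (hP : WeibullTailed P γ) (y : ℝ) :
    {u : ℝ | P (Ioi u) ≤ ENNReal.ofReal (Real.exp (-y))}.Nonempty := by
  obtain ⟨u, hu⟩ := ((hazard_tendsto_atTop hγ hP).eventually_ge_atTop y).exists
  exact ⟨u, (mem_Sy_iff hγ hP).2 hu⟩

lemma Sy_bddBelow [IsProbabilityMeasure P] {y : ℝ} (hy : 0 < y) :
    BddBelow {u : ℝ | P (Ioi u) ≤ ENNReal.ofReal (Real.exp (-y))} := by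
  have hlt : ENNReal.ofReal (Real.exp (-y)) < 1 := by
    rw [ENNReal.ofReal_lt_one]
    exact Real.exp_lt_one_iff.2 (by linarith)
  by_contra hb
  rw [not_bddBelow_iff] at hb
  have key : ∀ u : ℝ, P (Ioi u) ≤ ENNReal.ofReal (Real.exp (-y)) := by
    intro u
    obtain ⟨v, hv, hvu⟩ := hb u
    exact le_trans (measure_mono (Ioi_subset_Ioi hvu.le)) hv
  have hmono : Monotone (fun n : ℕ => Ioi (-(n:ℝ))) := by
    intro m n hmn
    exact Ioi_subset_Ioi (by exact_mod_cast neg_le_neg (by exact_mod_cast hmn))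
  have huniv : (⋃ n : ℕ, Ioi (-(n:ℝ))) = univ := by
    ext x; simp only [mem_iUnion, mem_Ioi, mem_univ, iff_true]
    obtain ⟨n, hn⟩ := exists_nat_gt (-x)
    exact ⟨n, by linarith⟩
  have := hmono.measure_iUnion (μ := P)
  rw [huniv, measure_univ] at this
  have : (1:ℝ≥0∞) ≤ ENNReal.ofReal (Real.exp (-y)) := by
    rw [this]; exact iSup_le fun n => key _
  exact absurd this (not_le.2 hlt)

lemma hazard_Vf_ge [IsProbabilityMeasure P] (hγ : 0 < γ) (hP : WeibullTailed P γ)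
    {y : ℝ} (hy : 0 < y) : y ≤ hazard P (Vf P y) := by
  set S := {u : ℝ | P (Ioi u) ≤ ENNReal.ofReal (Real.exp (-y))} with hS
  have hne : S.Nonempty := Sy_nonempty hγ hP y
  have hmem : Vf P y ∈ S := by
    have hu : ∀ n : ℕ, ∃ u ∈ S, u < sInf S + 1/(n+1) := fun n =>
      Real.lt_sInf_add_pos hne (by positivity)
    choose u hu hult using hu
    have hsub : Ioi (sInf S) ⊆ ⋃ n, Ioi (u n) := by
      intro x hx
      obtain ⟨n, hn⟩ := exists_nat_one_div_lt (sub_pos.2 (mem_Ioi.1 hx) : (0:ℝ) < x - sInf S)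
      exact mem_iUnion.2 ⟨n, by have := hult n; simp only [mem_Ioi]; push_cast at hn ⊢; linarith⟩
    have hdir : Directed (· ⊆ ·) (fun n => Ioi (u n)) := by
      intro i j
      rcases le_total (u i) (u j) with h | h
      · exact ⟨i, subset_rfl, Ioi_subset_Ioi h⟩
      · exact ⟨j, Ioi_subset_Ioi h, subset_rfl⟩
    have := hdir.measure_iUnion (μ := P)
    have hle : P (Ioi (sInf S)) ≤ ENNReal.ofReal (Real.exp (-y)) := by
      calc P (Ioi (sInf S)) ≤ P (⋃ n, Ioi (u n)) := measure_mono hsub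
        _ = ⨆ n, P (Ioi (u n)) := this
        _ ≤ ENNReal.ofReal (Real.exp (-y)) := iSup_le fun n => hu n
    exact hle
  exact (mem_Sy_iff hγ hP).1 hmem

lemma le_Vf_of_hazard_lt [IsProbabilityMeasure P] (hγ : 0 < γ) (hP : WeibullTailed P γ)
    {y u : ℝ} (hy : 0 < y) (h : u < Vf P y) : hazard P u < y := by
  by_contra hc
  push_neg at hc
  have : Vf P y ≤ u := csInf_le (Sy_bddBelow hy) ((mem_Sy_iff hγ hP).2 hc)
  linarith

lemma Vf_le_of_hazard_ge [IsProbabilityMeasure P] (hγ : 0 < γ) (hP : WeibullTailed P γ)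
    {y u : ℝ} (hy : 0 < y) (h : y ≤ hazard P u) : Vf P y ≤ u :=
  csInf_le (Sy_bddBelow hy) ((mem_Sy_iff hγ hP).2 h)

lemma Vf_mono [IsProbabilityMeasure P] (hγ : 0 < γ) (hP : WeibullTailed P γ)
    {y y' : ℝ} (hy : 0 < y) (h : y ≤ y') : Vf P y ≤ Vf P y' := by
  apply csInf_le_csInf (Sy_bddBelow hy) (Sy_nonempty hγ hP y')
  intro u hu
  exact le_trans hu (ENNReal.ofReal_le_ofReal (Real.exp_le_exp.2 (by linarith)))

lemma Vf_tendsto_atTop [IsProbabilityMeasure P] (hγ : 0 < γ) (hP : WeibullTailed P γ) :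
    Tendsto (Vf P) atTop atTop := by
  rw [tendsto_atTop]
  intro M
  filter_upwards [eventually_gt_atTop (max (hazard P M) 0)] with y hy
  have hy0 : 0 < y := lt_of_le_of_lt (le_max_right _ _) hy
  by_contra h
  push_neg at h
  have h1 : hazard P (Vf P y) ≤ hazard P M := hazard_mono hγ hP h.le
  have h2 := hazard_Vf_ge hγ hP hy0
  have := lt_of_le_of_lt (le_max_left (hazard P M) 0) hy
  linarith
lemma rpow_inv_gamma_pow (hγ : 0 < γ) {b : ℝ} (hb : 0 < b) :
    (b ^ (1/(2*γ))) ^ γ = b ^ (1/2 : ℝ) := by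
  rw [← Real.rpow_mul hb.le]
  congr 1
  field_simp

lemma hazard_Vf_ratio [IsProbabilityMeasure P] (hγ : 0 < γ) (hP : WeibullTailed P γ) :
    Tendsto (fun y => hazard P (Vf P y) / y) atTop (𝓝 1) := by
  rw [tendsto_order]
  constructor
  · intro a ha
    filter_upwards [eventually_gt_atTop 0] with y hy
    have h1 := hazard_Vf_ge hγ hP hy
    have : 1 ≤ hazard P (Vf P y) / y := (one_le_div hy).2 h1
    linarith
  · intro b hb
    have hb0 : 0 < b := lt_trans one_pos hb
    set c : ℝ := b ^ (1/(2*γ)) with hc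
    have hc1 : 1 < c := Real.one_lt_rpow_iff_of_pos hb0 |>.2 (Or.inl ⟨hb, by positivity⟩)
    have hc0 : 0 < c := lt_trans one_pos hc1
    have hcγ : c ^ γ = b ^ (1/2 : ℝ) := rpow_inv_gamma_pow hγ hb0
    have hcb : c ^ γ < b := by
      rw [hcγ]
      calc b ^ (1/2:ℝ) < b ^ (1:ℝ) := Real.rpow_lt_rpow_of_exponent_lt hb (by norm_num)
        _ = b := Real.rpow_one b
    set m : ℝ := (c ^ γ + b) / 2 with hm
    have hm1 : c ^ γ < m := by rw [hm]; linarith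
    have hm2 : m < b := by rw [hm]; linarith
    have hsc : Tendsto (fun y => Vf P y / c) atTop atTop :=
      (Vf_tendsto_atTop hγ hP).atTop_div_const hc0
    have hratio2 : Tendsto (fun y => hazard P ((Vf P y / c) * c) / hazard P (Vf P y / c))
        atTop (𝓝 (c ^ γ)) := (hP c hc0).comp hsc
    filter_upwards [eventually_gt_atTop 0,
      (Vf_tendsto_atTop hγ hP).eventually_gt_atTop 0,
      hsc.eventually (eventually_hazard_pos hγ hP),
      hratio2.eventually (eventually_lt_nhds hm1)] with y hy hVy hhs hr2
    have hVeq : (Vf P y / c) * c = Vf P y := div_mul_cancel₀ _ hc0.ne'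
    rw [hVeq] at hr2
    have hsV : Vf P y / c < Vf P y := div_lt_self hVy hc1
    have hΛs : hazard P (Vf P y / c) < y := le_Vf_of_hazard_lt hγ hP hy hsV
    have hΛV : hazard P (Vf P y) = (hazard P (Vf P y) / hazard P (Vf P y / c)) *
        hazard P (Vf P y / c) := (div_mul_cancel₀ _ hhs.ne').symm
    have h1 : hazard P (Vf P y) < m * y := by
      rw [hΛV]
      calc (hazard P (Vf P y) / hazard P (Vf P y / c)) * hazard P (Vf P y / c)
          ≤ (hazard P (Vf P y) / hazard P (Vf P y / c)) * y := by
            apply mul_le_mul_of_nonneg_left hΛs.le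
            exact div_nonneg (hazard_nonneg _) (hazard_nonneg _)
        _ < m * y := by
            apply mul_lt_mul_of_pos_right hr2 hy
    rw [div_lt_iff₀ hy]
    have := mul_lt_mul_of_pos_right hm2 hy
    linarith

lemma Vf_rv [IsProbabilityMeasure P] (hγ : 0 < γ) (hP : WeibullTailed P γ)
    {x : ℝ} (hx : 0 < x) :
    Tendsto (fun y => Vf P (y * x) / Vf P y) atTop (𝓝 (x ^ (1/γ))) := by
  have hx1γ : 0 < x ^ (1/γ) := Real.rpow_pos_of_pos hx _
  have hVx : Tendsto (fun y => Vf P (y * x)) atTop atTop :=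
    (Vf_tendsto_atTop hγ hP).comp (tendsto_id.atTop_mul_const hx)
  rw [tendsto_order]
  constructor
  · intro a ha
    rcases le_or_gt a 0 with ha0 | ha0
    · filter_upwards [(Vf_tendsto_atTop hγ hP).eventually_gt_atTop 0,
        hVx.eventually_gt_atTop 0] with y h1 h2
      exact lt_of_le_of_lt ha0 (div_pos h2 h1)
    · set c : ℝ := (a + x ^ (1/γ)) / 2 with hcdef
      have hac : a < c := by rw [hcdef]; linarith
      have hcx : c < x ^ (1/γ) := by rw [hcdef]; linarith
      have hc0 : 0 < c := lt_trans ha0 hac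
      have hcγx : c ^ γ < x := by
        have := Real.rpow_lt_rpow hc0.le hcx hγ
        rwa [← Real.rpow_mul hx.le, one_div, inv_mul_cancel₀ hγ.ne', Real.rpow_one] at this
      set d : ℝ := (c ^ γ + x) / 2 with hddef
      have hd1 : c ^ γ < d := by rw [hddef]; linarith
      have hd2 : d < x := by rw [hddef]; linarith
      have hd0 : 0 < d := by
        have : 0 < c ^ γ := Real.rpow_pos_of_pos hc0 γ
        rw [hddef]; linarith
      have hsc : Tendsto (fun y => Vf P y) atTop atTop := Vf_tendsto_atTop hγ hP
      have hratio2 : Tendsto (fun y => hazard P (Vf P y * c) / hazard P (Vf P y))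
          atTop (𝓝 (c ^ γ)) := (hP c hc0).comp hsc
      have hm : (1:ℝ) < x / d := (one_lt_div hd0).2 hd2
      filter_upwards [eventually_gt_atTop 0,
        hsc.eventually_gt_atTop 0,
        hratio2.eventually (eventually_lt_nhds hd1),
        (hazard_Vf_ratio hγ hP).eventually (eventually_lt_nhds hm)] with y hy hVy hr2 hrat
      have hyx : 0 < y * x := mul_pos hy hx
      have hΛV1 : y ≤ hazard P (Vf P y) := hazard_Vf_ge hγ hP hy
      have hΛV2 : hazard P (Vf P y) < (x/d) * y := by
        have := (div_lt_iff₀ hy).1 hrat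
        linarith [this]
      have hkey : hazard P (Vf P y * c) < y * x := by
        have heq : hazard P (Vf P y * c) =
            (hazard P (Vf P y * c) / hazard P (Vf P y)) * hazard P (Vf P y) := by
          rw [div_mul_cancel₀]
          exact ne_of_gt (lt_of_lt_of_le hy hΛV1)
        rw [heq]
        calc (hazard P (Vf P y * c) / hazard P (Vf P y)) * hazard P (Vf P y)
            < d * hazard P (Vf P y) := by
              apply mul_lt_mul_of_pos_right hr2 (lt_of_lt_of_le hy hΛV1)
          _ < d * ((x/d) * y) := by
              apply mul_lt_mul_of_pos_left hΛV2 hd0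
          _ = y * x := by field_simp
      have hlt : Vf P y * c < Vf P (y * x) := by
        by_contra hcon
        push_neg at hcon
        have h1 : hazard P (Vf P (y*x)) ≤ hazard P (Vf P y * c) := hazard_mono hγ hP hcon
        have h2 : y * x ≤ hazard P (Vf P (y*x)) := hazard_Vf_ge hγ hP hyx
        linarith
      calc a < c := hac
        _ < Vf P (y * x) / Vf P y := (lt_div_iff₀ hVy).2 (by linarith [mul_comm (Vf P y) c])
  · intro b hb
    set c : ℝ := (x ^ (1/γ) + b) / 2 with hcdef
    have hcx : x ^ (1/γ) < c := by rw [hcdef]; linarith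
    have hcb : c < b := by rw [hcdef]; linarith
    have hc0 : 0 < c := lt_trans hx1γ hcx
    have hcγx : x < c ^ γ := by
      have := Real.rpow_lt_rpow (Real.rpow_pos_of_pos hx _).le hcx hγ
      rwa [← Real.rpow_mul hx.le, one_div, inv_mul_cancel₀ hγ.ne', Real.rpow_one] at this
    set d : ℝ := (x + c ^ γ) / 2 with hddef
    have hd1 : d < c ^ γ := by rw [hddef]; linarith
    have hd2 : x < d := by rw [hddef]; linarith
    have hsc : Tendsto (fun y => Vf P y) atTop atTop := Vf_tendsto_atTop hγ hP
    have hratio2 : Tendsto (fun y => hazard P (Vf P y * c) / hazard P (Vf P y))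
        atTop (𝓝 (c ^ γ)) := (hP c hc0).comp hsc
    filter_upwards [eventually_gt_atTop 0,
      hsc.eventually_gt_atTop 0,
      hratio2.eventually (eventually_gt_nhds hd1)] with y hy hVy hr2
    have hyx : 0 < y * x := mul_pos hy hx
    have hΛV1 : y ≤ hazard P (Vf P y) := hazard_Vf_ge hγ hP hy
    have hΛpos : 0 < hazard P (Vf P y) := lt_of_lt_of_le hy hΛV1
    have hkey : y * x ≤ hazard P (Vf P y * c) := by
      have heq : hazard P (Vf P y * c) =
          (hazard P (Vf P y * c) / hazard P (Vf P y)) * hazard P (Vf P y) := by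
        rw [div_mul_cancel₀ _ hΛpos.ne']
      rw [heq]
      calc y * x ≤ d * y := by nlinarith
        _ ≤ d * hazard P (Vf P y) := mul_le_mul_of_nonneg_left hΛV1 (by nlinarith)
        _ ≤ (hazard P (Vf P y * c) / hazard P (Vf P y)) * hazard P (Vf P y) :=
            mul_le_mul_of_nonneg_right hr2.le hΛpos.le
    have hle : Vf P (y * x) ≤ Vf P y * c := Vf_le_of_hazard_ge hγ hP hyx hkey
    calc Vf P (y * x) / Vf P y ≤ c := by
          rw [div_le_iff₀ hVy]; linarith [mul_comm (Vf P y) c]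
      _ < b := hcb

lemma Vf_shift [IsProbabilityMeasure P] (hγ : 0 < γ) (hP : WeibullTailed P γ)
    {L : ℝ} (hL : 0 ≤ L) :
    Tendsto (fun y => Vf P (y + L) / Vf P y) atTop (𝓝 1) := by
  rw [tendsto_order]
  constructor
  · intro a ha
    filter_upwards [eventually_gt_atTop 0,
      (Vf_tendsto_atTop hγ hP).eventually_gt_atTop 0] with y hy hVy
    have h1 : Vf P y ≤ Vf P (y + L) := Vf_mono hγ hP hy (by linarith)
    have : (1:ℝ) ≤ Vf P (y + L) / Vf P y := (one_le_div hVy).2 h1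
    linarith
  · intro b hb
    have hb0 : 0 < b := lt_trans one_pos hb
    have hbγ : 1 < b ^ γ := Real.one_lt_rpow_iff_of_pos hb0 |>.2 (Or.inl ⟨hb, hγ⟩)
    set x : ℝ := (1 + b ^ γ) / 2 with hxdef
    have hx1 : 1 < x := by rw [hxdef]; linarith
    have hx0 : 0 < x := lt_trans one_pos hx1
    have hxb : x ^ (1/γ) < b := by
      have h1 : x ^ (1/γ) < (b ^ γ) ^ (1/γ) :=
        Real.rpow_lt_rpow hx0.le (by rw [hxdef]; linarith) (by positivity)
      rwa [← Real.rpow_mul hb0.le, mul_one_div, div_self hγ.ne', Real.rpow_one] at h1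
    filter_upwards [eventually_gt_atTop 0,
      eventually_ge_atTop (L / (x - 1)),
      (Vf_tendsto_atTop hγ hP).eventually_gt_atTop 0,
      (Vf_rv hγ hP hx0).eventually (eventually_lt_nhds hxb)] with y hy hyL hVy hrv
    have hyx : y + L ≤ y * x := by
      have : L ≤ y * (x - 1) := (div_le_iff₀ (by linarith)).1 hyL
      nlinarith
    have h1 : Vf P (y + L) ≤ Vf P (y * x) := Vf_mono hγ hP (by linarith) hyx
    calc Vf P (y + L) / Vf P y ≤ Vf P (y * x) / Vf P y :=
          div_le_div_of_nonneg_right h1 hVy.le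
      _ < b := hrv
lemma rpow_logb_comm {K x : ℝ} (hK : 1 < K) (hx : 1 ≤ x) :
    K ^ (Real.logb 2 x) = x ^ (Real.logb 2 K) := by
  have hK0 : 0 < K := lt_trans one_pos hK
  have hx0 : 0 < x := lt_of_lt_of_le one_pos hx
  rw [Real.rpow_def_of_pos hK0, Real.rpow_def_of_pos hx0, Real.logb, Real.logb]
  congr 1
  ring

lemma Vf_potter [IsProbabilityMeasure P] (hγ : 0 < γ) (hP : WeibullTailed P γ) :
    ∃ u₀ K p : ℝ, 1 ≤ u₀ ∧ 1 < K ∧ 0 ≤ p ∧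
      (∀ y, u₀ ≤ y → 0 < Vf P y) ∧
      (∀ u s, u₀ ≤ u → 0 ≤ s → Vf P (u + s) ≤ K * (1+s) ^ p * Vf P u) := by
  set K : ℝ := 2 ^ (1/γ) + 1 with hKdef
  have hK2 : (2:ℝ) ^ (1/γ) < K := by rw [hKdef]; linarith
  have h2pos : (0:ℝ) < 2 ^ (1/γ) := Real.rpow_pos_of_pos two_pos _
  have hK1 : 1 < K := by rw [hKdef]; linarith
  have hK0 : 0 < K := lt_trans one_pos hK1
  set p : ℝ := Real.logb 2 K with hpdef
  have hp0 : 0 ≤ p := Real.logb_nonneg one_lt_two hK1.le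
  have hev : ∀ᶠ y in atTop, 0 < Vf P y ∧ Vf P (y * 2) ≤ K * Vf P y := by
    filter_upwards [(Vf_tendsto_atTop hγ hP).eventually_gt_atTop 0,
      ((Vf_rv hγ hP two_pos).eventually (eventually_lt_nhds hK2))] with y h1 h2
    exact ⟨h1, by rw [div_lt_iff₀ h1] at h2; linarith⟩
  obtain ⟨u₀', hu₀'⟩ := eventually_atTop.1 hev
  set u₀ : ℝ := max u₀' 1 with hu₀def
  refine ⟨u₀, K, p, le_max_right _ _, hK1, hp0, ?_, ?_⟩
  · intro y hy
    exact (hu₀' y (le_trans (le_max_left _ _) hy)).1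
  · have hchain : ∀ n : ℕ, ∀ u, u₀ ≤ u → Vf P (u * 2^n) ≤ K^n * Vf P u := by
      intro n
      induction n with
      | zero => intro u hu; simp
      | succ n ih =>
        intro u hu
        have hu1 : (1:ℝ) ≤ u := le_trans (le_max_right _ _) hu
        have hu2n : u₀ ≤ u * 2^n := by
          calc u₀ ≤ u := hu
            _ = u * 1 := (mul_one u).symm
            _ ≤ u * 2^n := by
                apply mul_le_mul_of_nonneg_left _ (by linarith)
                exact one_le_pow₀ one_le_two
        have h1 : Vf P ((u * 2^n) * 2) ≤ K * Vf P (u * 2^n) :=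
          (hu₀' _ (le_trans (le_max_left _ _) hu2n)).2
        have h2 := ih u hu
        calc Vf P (u * 2^(n+1)) = Vf P ((u * 2^n) * 2) := by ring_nf
          _ ≤ K * Vf P (u * 2^n) := h1
          _ ≤ K * (K^n * Vf P u) := mul_le_mul_of_nonneg_left h2 hK0.le
          _ = K^(n+1) * Vf P u := by ring
    intro u s hu hs
    have hu1 : (1:ℝ) ≤ u := le_trans (le_max_right _ _) hu
    set n : ℕ := ⌈Real.logb 2 (1+s)⌉₊ with hndef
    have hlogb_nonneg : 0 ≤ Real.logb 2 (1+s) := Real.logb_nonneg one_lt_two (by linarith)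
    have h2n : 1 + s ≤ (2:ℝ)^n := by
      have h1 : Real.logb 2 (1+s) ≤ (n:ℝ) := Nat.le_ceil _
      have h2 : (2:ℝ) ^ (Real.logb 2 (1+s)) ≤ (2:ℝ) ^ ((n:ℕ):ℝ) :=
        Real.rpow_le_rpow_of_exponent_le one_le_two h1
      rwa [Real.rpow_logb two_pos (by norm_num) (by linarith), Real.rpow_natCast] at h2
    have hmono : Vf P (u + s) ≤ Vf P (u * 2^n) := by
      apply Vf_mono hγ hP (by linarith)
      calc u + s ≤ u + u * s := by nlinarith
        _ = u * (1 + s) := by ring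
        _ ≤ u * 2^n := mul_le_mul_of_nonneg_left h2n (by linarith)
    have hKn : (K:ℝ)^n ≤ K * (1+s) ^ p := by
      have hn1 : (n:ℝ) ≤ Real.logb 2 (1+s) + 1 := (Nat.ceil_lt_add_one hlogb_nonneg).le
      calc (K:ℝ)^n = K ^ ((n:ℕ):ℝ) := (Real.rpow_natCast K n).symm
        _ ≤ K ^ (Real.logb 2 (1+s) + 1) := Real.rpow_le_rpow_of_exponent_le hK1.le hn1
        _ = K ^ (Real.logb 2 (1+s)) * K := by rw [Real.rpow_add hK0, Real.rpow_one]
        _ = (1+s) ^ p * K := by rw [rpow_logb_comm hK1 (by linarith)]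
        _ = K * (1+s) ^ p := mul_comm _ _
    calc Vf P (u + s) ≤ Vf P (u * 2^n) := hmono
      _ ≤ K^n * Vf P u := hchain n u hu
      _ ≤ (K * (1+s) ^ p) * Vf P u := by
          apply mul_le_mul_of_nonneg_right hKn
          exact ((hu₀' u (le_trans (le_max_left _ _) hu)).1).le
      _ = K * (1+s) ^ p * Vf P u := rfl
variable {w : ℝ → ℝ} {κ : ℝ} {ℓ : ℝ → ℝ}

lemma w_integrable (hw : IsWeight w κ ℓ) : IntegrableOn w (Ioc (0:ℝ) 1) := by
  by_contra h
  have := integral_undef h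
  rw [hw.total] at this
  norm_num at this

lemma w_half (hw : IsWeight w κ ℓ) :
    ∃ t₁ ρ : ℝ, 0 < t₁ ∧ t₁ ≤ 1 ∧ 0 < ρ ∧ ρ < 2 ∧
      ∀ t, t ∈ Ioc 0 t₁ → 0 < w t ∧ w (t/2) ≤ ρ * w t := by
  have h2κ : (2:ℝ) ^ (-κ) < 2 := by
    have := Real.rpow_lt_rpow_of_exponent_lt one_lt_two (by linarith [hw.kappa_gt] : -κ < 1)
    rwa [Real.rpow_one] at this
  have h2κ0 : (0:ℝ) < 2 ^ (-κ) := Real.rpow_pos_of_pos two_pos _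
  set ρ : ℝ := ((2:ℝ) ^ (-κ) + 2) / 2 with hρdef
  have hρ1 : (2:ℝ) ^ (-κ) < ρ := by rw [hρdef]; linarith
  have hρ2 : ρ < 2 := by rw [hρdef]; linarith
  have hρ0 : 0 < ρ := by rw [hρdef]; linarith
  -- auxiliary tendsto facts
  have hhalf_self : Tendsto (fun t : ℝ => t / 2) (𝓝[>] (0:ℝ)) (𝓝[>] (0:ℝ)) := by
    rw [tendsto_nhdsWithin_iff]
    constructor
    · have : Tendsto (fun t : ℝ => t / 2) (𝓝 (0:ℝ)) (𝓝 ((0:ℝ)/2)) :=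
        (continuous_id.div_const 2).tendsto 0
      simpa using this.mono_left nhdsWithin_le_nhds
    · filter_upwards [self_mem_nhdsWithin] with t ht
      exact div_pos (show (0:ℝ) < t from ht) two_pos
  have hinv : Tendsto (fun t : ℝ => 1 / t) (𝓝[>] (0:ℝ)) atTop := by
    simpa [one_div] using tendsto_inv_nhdsGT_zero (𝕜 := ℝ)
  have hℓ : Tendsto (fun t : ℝ => ℓ ((1/t) * 2) / ℓ (1/t)) (𝓝[>] (0:ℝ)) (𝓝 1) := by
    have := (hw.slow 2 two_pos).comp hinv
    rwa [Real.rpow_zero] at this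
  have hh2 : Tendsto (fun t : ℝ => w (t/2) / ((t/2) ^ κ * ℓ (1 / (t/2))))
      (𝓝[>] (0:ℝ)) (𝓝 1) := hw.asym.comp hhalf_self
  have hT : Tendsto (fun t : ℝ =>
      ((w (t/2) / ((t/2) ^ κ * ℓ (1 / (t/2)))) / (w t / (t ^ κ * ℓ (1/t)))) *
        ((2:ℝ) ^ (-κ)) * (ℓ ((1/t) * 2) / ℓ (1/t))) (𝓝[>] (0:ℝ)) (𝓝 ((2:ℝ) ^ (-κ))) := by
    have := ((hh2.div hw.asym one_ne_zero).mul_const ((2:ℝ) ^ (-κ))).mul hℓ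
    simpa using this
  -- eventual equality
  have hev : ∀ᶠ t in 𝓝[>] (0:ℝ),
      w (t/2) / w t =
      ((w (t/2) / ((t/2) ^ κ * ℓ (1 / (t/2)))) / (w t / (t ^ κ * ℓ (1/t)))) *
        ((2:ℝ) ^ (-κ)) * (ℓ ((1/t) * 2) / ℓ (1/t)) := by
    have hm : Ioo (0:ℝ) 1 ∈ 𝓝[>] (0:ℝ) := Ioo_mem_nhdsGT_of_mem ⟨le_refl 0, one_pos⟩
    filter_upwards [hw.asym.eventually (eventually_gt_nhds (by norm_num : (1:ℝ)/2 < 1)),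
      hh2.eventually (eventually_gt_nhds (by norm_num : (1:ℝ)/2 < 1)), hm] with t hht hht2 htm
    obtain ⟨ht0, ht1⟩ := htm
    have ht2 : t/2 ∈ Ioc (0:ℝ) 1 := ⟨div_pos ht0 two_pos, by linarith⟩
    have hD : (t ^ κ * ℓ (1/t)) ≠ 0 := by
      intro h; rw [h, div_zero] at hht; norm_num at hht
    have hD2 : ((t/2) ^ κ * ℓ (1 / (t/2))) ≠ 0 := by
      intro h; rw [h, div_zero] at hht2; norm_num at hht2
    have hwt : w t ≠ 0 := by
      intro h; rw [h, zero_div] at hht; norm_num at hht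
    have htκ : (0:ℝ) < t ^ κ := Real.rpow_pos_of_pos ht0 κ
    have ht2κ : ((t/2):ℝ) ^ κ = t ^ κ * (2:ℝ) ^ (-κ) := by
      rw [div_eq_mul_inv, Real.mul_rpow ht0.le (by norm_num),
        Real.inv_rpow (by norm_num : (0:ℝ) ≤ 2), ← Real.rpow_neg (by norm_num : (0:ℝ) ≤ 2)]
    have hinv2 : 1 / (t/2) = (1/t) * 2 := by field_simp
    have hℓ1 : ℓ (1/t) ≠ 0 := by
      intro h; rw [h, mul_zero] at hD; exact hD rfl
    have hℓ2 : ℓ ((1/t) * 2) ≠ 0 := by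
      intro h; rw [hinv2, h, mul_zero] at hD2; exact hD2 rfl
    rw [hinv2] at hD2 ⊢
    rw [ht2κ] at hD2 ⊢
    set D1 : ℝ := t ^ κ * ℓ (1/t) with hD1def
    set D2 : ℝ := t ^ κ * (2:ℝ) ^ (-κ) * ℓ ((1/t) * 2) with hD2def
    calc w (t/2) / w t
        = ((w (t/2) / D2) * D2) / ((w t / D1) * D1) := by
          rw [div_mul_cancel₀ _ hD2, div_mul_cancel₀ _ hD]
      _ = ((w (t/2) / D2) / (w t / D1)) * (D2 / D1) := mul_div_mul_comm _ _ _ _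
      _ = ((w (t/2) / D2) / (w t / D1)) * ((2:ℝ) ^ (-κ) * (ℓ ((1/t) * 2) / ℓ (1/t))) := by
          congr 1
          rw [hD1def, hD2def]
          field_simp
      _ = ((w (t/2) / D2) / (w t / D1)) * ((2:ℝ) ^ (-κ)) * (ℓ ((1/t) * 2) / ℓ (1/t)) := by
          ring
  have htend : Tendsto (fun t : ℝ => w (t/2) / w t) (𝓝[>] (0:ℝ)) (𝓝 ((2:ℝ) ^ (-κ))) :=
    hT.congr' (hev.mono fun t ht => ht.symm)
  have hev2 : ∀ᶠ t in 𝓝[>] (0:ℝ), 0 < w t ∧ w (t/2) ≤ ρ * w t := by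
    have hm : Ioo (0:ℝ) 1 ∈ 𝓝[>] (0:ℝ) := Ioo_mem_nhdsGT_of_mem ⟨le_refl 0, one_pos⟩
    filter_upwards [hw.asym.eventually (eventually_gt_nhds (by norm_num : (1:ℝ)/2 < 1)),
      htend.eventually (eventually_lt_nhds hρ1), hm] with t hht hrt htm
    have hwt0 : 0 < w t := by
      rcases lt_or_ge 0 (w t) with h | h
      · exact h
      · have : w t = 0 := le_antisymm h (hw.nonneg t ⟨htm.1, htm.2.le⟩)
        rw [this, zero_div] at hht; norm_num at hht
    refine ⟨hwt0, ?_⟩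
    rw [div_lt_iff₀ hwt0] at hrt
    linarith
  obtain ⟨u, hu, hsub⟩ := mem_nhdsGT_iff_exists_Ioc_subset.1 hev2
  refine ⟨min u 1, ρ, lt_min hu one_pos, min_le_right _ _, hρ0, hρ2, ?_⟩
  intro t ht
  exact hsub ⟨ht.1, le_trans ht.2 (min_le_left _ _)⟩
lemma block_integrable (hw : IsWeight w κ ℓ) {t₁ : ℝ} (ht₁0 : 0 < t₁) (ht₁1 : t₁ ≤ 1)
    (n : ℕ) : IntervalIntegrable w volume (t₁ / 2^(n+1)) (t₁ / 2^n) := by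
  have hle : t₁ / 2^(n+1) ≤ t₁ / 2^n := by
    apply div_le_div_of_nonneg_left ht₁0.le (by positivity)
    exact pow_le_pow_right₀ one_le_two (Nat.le_succ n)
  rw [intervalIntegrable_iff_integrableOn_Ioc_of_le hle]
  apply (w_integrable hw).mono_set
  intro x hx
  refine ⟨lt_trans (by positivity) hx.1, le_trans hx.2 ?_⟩
  calc t₁ / 2^n ≤ t₁ / 1 := by
        apply div_le_div_of_nonneg_left ht₁0.le one_pos (one_le_pow₀ one_le_two)
    _ = t₁ := div_one t₁
    _ ≤ 1 := ht₁1

lemma block_decay (hw : IsWeight w κ ℓ) {t₁ ρ : ℝ} (ht₁0 : 0 < t₁) (ht₁1 : t₁ ≤ 1)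
    (hρ0 : 0 < ρ)
    (hbound : ∀ t, t ∈ Ioc 0 t₁ → 0 < w t ∧ w (t/2) ≤ ρ * w t) (n : ℕ) :
    0 ≤ (∫ t in Ioc (t₁ / 2^(n+1)) (t₁ / 2^n), w t) ∧
    (∫ t in Ioc (t₁ / 2^(n+2)) (t₁ / 2^(n+1)), w t) ≤
      (ρ/2) * ∫ t in Ioc (t₁ / 2^(n+1)) (t₁ / 2^n), w t := by
  have hA : ∀ m : ℕ, (0:ℝ) < t₁ / 2^m := fun m => by positivity
  have hAle : ∀ m : ℕ, t₁ / 2^(m+1) ≤ t₁ / 2^m := fun m => by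
    apply div_le_div_of_nonneg_left ht₁0.le (by positivity)
    exact pow_le_pow_right₀ one_le_two (Nat.le_succ m)
  have hAt : ∀ m : ℕ, t₁ / 2^m ≤ t₁ := fun m => by
    calc t₁ / 2^m ≤ t₁ / 1 := by
          apply div_le_div_of_nonneg_left ht₁0.le one_pos (one_le_pow₀ one_le_two)
      _ = t₁ := div_one t₁
  have hsub : ∀ m : ℕ, Ioc (t₁ / 2^(m+1)) (t₁ / 2^m) ⊆ Ioc 0 t₁ := fun m x hx =>
    ⟨lt_trans (hA (m+1)) hx.1, le_trans hx.2 (hAt m)⟩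
  constructor
  · apply setIntegral_nonneg measurableSet_Ioc
    intro x hx
    exact (hbound x (hsub n hx)).1.le
  · have hhalf : t₁ / 2^(n+2) = (t₁ / 2^(n+1)) / 2 := by
      rw [div_div, ← pow_succ]
    have hhalf' : t₁ / 2^(n+1) = (t₁ / 2^n) / 2 := by
      rw [div_div, ← pow_succ]
    have heq1 : (∫ t in Ioc (t₁ / 2^(n+2)) (t₁ / 2^(n+1)), w t) =
        ∫ t in (t₁ / 2^(n+2))..(t₁ / 2^(n+1)), w t :=
      (intervalIntegral.integral_of_le (hAle (n+1))).symm
    have heq2 : (∫ t in Ioc (t₁ / 2^(n+1)) (t₁ / 2^n), w t) =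
        ∫ t in (t₁ / 2^(n+1))..(t₁ / 2^n), w t :=
      (intervalIntegral.integral_of_le (hAle n)).symm
    have hcov : (∫ x in (t₁ / 2^(n+1))..(t₁ / 2^n), w (x / 2)) =
        (2:ℝ) • ∫ x in ((t₁ / 2^(n+1))/2)..((t₁ / 2^n)/2), w x :=
      intervalIntegral.integral_comp_div w two_ne_zero
    have hint1 : IntervalIntegrable w volume ((t₁ / 2^(n+1))/2) ((t₁ / 2^n)/2) := by
      rw [← hhalf, ← hhalf']
      exact block_integrable hw ht₁0 ht₁1 (n+1)
    have hint2 : IntervalIntegrable (fun x => w (x/2)) volume (t₁ / 2^(n+1)) (t₁ / 2^n) := by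
      have h := hint1.comp_mul_left (c := 1/2)
      have he : (fun x => w ((1/2) * x)) = (fun x => w (x/2)) := by
        funext x; rw [one_div, inv_mul_eq_div]
      rw [he] at h
      have e1 : (t₁ / 2^(n+1))/2/(1/2) = t₁ / 2^(n+1) := by field_simp
      have e2 : (t₁ / 2^n)/2/(1/2) = t₁ / 2^n := by field_simp
      rwa [e1, e2] at h
    have hint3 : IntervalIntegrable (fun x => ρ * w x) volume (t₁ / 2^(n+1)) (t₁ / 2^n) :=
      (block_integrable hw ht₁0 ht₁1 n).const_mul ρ
    have hmono : (∫ x in (t₁ / 2^(n+1))..(t₁ / 2^n), w (x / 2)) ≤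
        ∫ x in (t₁ / 2^(n+1))..(t₁ / 2^n), ρ * w x := by
      apply intervalIntegral.integral_mono_on (hAle n) hint2 hint3
      intro x hx
      have hx' : x ∈ Ioc 0 t₁ := ⟨lt_of_lt_of_le (hA (n+1)) hx.1, le_trans hx.2 (hAt n)⟩
      exact (hbound x hx').2
    have hconst : (∫ x in (t₁ / 2^(n+1))..(t₁ / 2^n), ρ * w x) =
        ρ * ∫ x in (t₁ / 2^(n+1))..(t₁ / 2^n), w x :=
      intervalIntegral.integral_const_mul ρ w
    rw [heq1, heq2]
    rw [hcov, ← hhalf, ← hhalf'] at hmono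
    -- hmono : 2 • (set integral over Ioc (n+2)) ≤ ∫ ρ w
    rw [hconst, smul_eq_mul] at hmono
    linarith
lemma summable_aux {C r : ℝ} (hC : 0 ≤ C) (hp : 0 ≤ C) (p : ℝ) (hp0 : 0 ≤ p)
    (hr0 : 0 < r) (hr1 : r < 1) :
    Summable (fun n : ℕ => C * ((n:ℝ)+2) ^ p * r ^ n) := by
  set k : ℕ := ⌈p⌉₊ with hk
  have hbase : Summable (fun n : ℕ => (n:ℝ)^k * r^n) := by
    apply summable_pow_mul_geometric_of_norm_lt_one
    rw [Real.norm_eq_abs, abs_of_pos hr0]; exact hr1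
  have hshift : Summable (fun n : ℕ => ((n:ℝ)+2)^k * r^(n+2)) := by
    have := (summable_nat_add_iff (f := fun n : ℕ => (n:ℝ)^k * r^n) 2).2 hbase
    simpa [add_comm] using this
  have h2 : Summable (fun n : ℕ => (C * (r^2)⁻¹) * (((n:ℝ)+2)^k * r^(n+2))) :=
    hshift.mul_left _
  apply Summable.of_nonneg_of_le (fun n => by positivity) (fun n => ?_) h2
  have h3 : ((n:ℝ)+2) ^ p ≤ ((n:ℝ)+2) ^ (k:ℝ) :=
    Real.rpow_le_rpow_of_exponent_le (by linarith [Nat.cast_nonneg (α := ℝ) n]) (Nat.le_ceil p)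
  have h4 : ((n:ℝ)+2) ^ ((k:ℕ):ℝ) = ((n:ℝ)+2) ^ (k:ℕ) := Real.rpow_natCast _ k
  calc C * ((n:ℝ)+2) ^ p * r ^ n ≤ C * ((n:ℝ)+2) ^ (k:ℕ) * r ^ n := by
        rw [← h4]
        apply mul_le_mul_of_nonneg_right (mul_le_mul_of_nonneg_left h3 hC) (by positivity)
    _ = (C * (r^2)⁻¹) * (((n:ℝ)+2)^k * r^(n+2)) := by
        field_simp
        ring
lemma VaR_eq_Vf {u t : ℝ} (ht : 0 < t) :
    VaR P (Real.exp (-u) * t) = Vf P (u - Real.log t) := by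
  rw [Vf]
  congr 1
  rw [neg_sub, Real.exp_sub, Real.exp_log ht]
  rw [div_eq_mul_inv, ← Real.exp_neg]
  ring

set_option maxHeartbeats 1000000 in
lemma tailRisk_bounds [IsProbabilityMeasure P] (hγ : 0 < γ) (hP : WeibullTailed P γ)
    (hw : IsWeight w κ ℓ) {b : ℝ} (hb : 1 < b) :
    ∀ᶠ u in atTop, 0 < Vf P u ∧
      ENNReal.ofReal (Vf P u) ≤ tailRisk w (Real.exp (-u)) P ∧
      tailRisk w (Real.exp (-u)) P ≤ ENNReal.ofReal (b * Vf P u) := by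
  classical
  obtain ⟨u₀, K, p, hu₀1, hK1, hp0, hVpos, hpotter⟩ := Vf_potter hγ hP
  obtain ⟨t₁, ρ, ht₁0, ht₁1, hρ0, hρ2, hwt⟩ := w_half hw
  set r : ℝ := ρ / 2 with hrdef
  have hr0 : 0 < r := by positivity
  have hr1 : r < 1 := by rw [hrdef]; linarith
  set a : ℕ → ℝ := fun n => ∫ t in Ioc (t₁ / 2^(n+1)) (t₁ / 2^n), w t with hadef
  have ha0 : ∀ n, 0 ≤ a n := fun n => (block_decay hw ht₁0 ht₁1 hρ0 hwt n).1
  have hadec : ∀ n, a (n+1) ≤ r * a n := fun n => by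
    have := (block_decay hw ht₁0 ht₁1 hρ0 hwt n).2
    simpa [hrdef, div_mul_eq_mul_div] using this
  have hageo : ∀ n, a n ≤ r ^ n * a 0 := by
    intro n
    induction n with
    | zero => simp
    | succ n ih =>
      calc a (n+1) ≤ r * a n := hadec n
        _ ≤ r * (r^n * a 0) := mul_le_mul_of_nonneg_left ih hr0.le
        _ = r^(n+1) * a 0 := by ring
  set L₁ : ℝ := -Real.log t₁ with hL₁def
  have hL₁0 : 0 ≤ L₁ := by
    rw [hL₁def, neg_nonneg]
    exact Real.log_nonpos ht₁0.le ht₁1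
  set C₁ : ℝ := 1 + L₁ + Real.log 2 with hC₁def
  have hlog2 : (0:ℝ) < Real.log 2 := Real.log_pos one_lt_two
  have hC₁0 : 1 ≤ C₁ := by rw [hC₁def]; linarith
  set Φ : ℕ → ℝ := fun n => K * (C₁ * ((n:ℝ)+2)) ^ p with hΦdef
  have hΦ0 : ∀ n, 0 ≤ Φ n := fun n => by
    have : (0:ℝ) < K := lt_trans one_pos hK1
    positivity
  -- pointwise Potter bound on block n
  have hblock : ∀ u, u₀ ≤ u → ∀ n : ℕ, ∀ t ∈ Ioc (t₁ / 2^(n+1)) (t₁ / 2^n),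
      Vf P (u - Real.log t) ≤ Φ n * Vf P u := by
    intro u hu n t ht
    have ht0 : 0 < t := lt_trans (by positivity) ht.1
    have htle : t ≤ 1 := le_trans ht.2 (by
      calc t₁ / 2^n ≤ t₁ / 1 := by
            apply div_le_div_of_nonneg_left ht₁0.le one_pos (one_le_pow₀ one_le_two)
        _ = t₁ := div_one t₁
        _ ≤ 1 := ht₁1)
    have hs0 : 0 ≤ -Real.log t := by
      rw [neg_nonneg]; exact Real.log_nonpos ht0.le htle
    have hsb : 1 + (-Real.log t) ≤ C₁ * ((n:ℝ)+2) := by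
      have h1 : t₁ / 2^(n+1) < t := ht.1
      have h2 : Real.log (t₁ / 2^(n+1)) < Real.log t := Real.log_lt_log (by positivity) h1
      have h3 : Real.log (t₁ / 2^(n+1)) = Real.log t₁ - ((n:ℝ)+1) * Real.log 2 := by
        rw [Real.log_div ht₁0.ne' (by positivity), Real.log_pow]
        push_cast
        ring
      have h4 : -Real.log t < L₁ + ((n:ℝ)+1) * Real.log 2 := by
        rw [hL₁def]; rw [h3] at h2; linarith
      have h5 : 1 + (L₁ + ((n:ℝ)+1) * Real.log 2) ≤ C₁ * ((n:ℝ)+2) := by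
        rw [hC₁def]
        have hn0 : (0:ℝ) ≤ (n:ℝ) := Nat.cast_nonneg n
        nlinarith
      linarith
    have hpott := hpotter u (-Real.log t) hu hs0
    have hrpow : (1 + -Real.log t) ^ p ≤ (C₁ * ((n:ℝ)+2)) ^ p :=
      Real.rpow_le_rpow (by linarith) hsb hp0
    have hVu0 : 0 ≤ Vf P u := (hVpos u hu).le
    have hrw : u - Real.log t = u + -Real.log t := by ring
    rw [hrw]
    calc Vf P (u + -Real.log t) ≤ K * (1 + -Real.log t) ^ p * Vf P u := hpott
      _ ≤ K * (C₁ * ((n:ℝ)+2)) ^ p * Vf P u := by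
          apply mul_le_mul_of_nonneg_right _ hVu0
          exact mul_le_mul_of_nonneg_left hrpow (le_trans one_pos.le hK1.le)
      _ = Φ n * Vf P u := rfl
    -- note: u - log t = u + (- log t)
  -- summable majorant
  set c : ℕ → ℝ := fun n => (K * C₁ ^ p * a 0) * ((n:ℝ)+2) ^ p * r ^ n with hcdef
  have hK0 : (0:ℝ) < K := lt_trans one_pos hK1
  have hc_nonneg : ∀ n, 0 ≤ c n := fun n => by
    have := ha0 0
    have hC₁p : (0:ℝ) ≤ C₁ ^ p := (Real.rpow_pos_of_pos (by linarith) p).le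
    positivity
  have hcsum : Summable c := by
    have := summable_aux (C := K * C₁ ^ p * a 0) (by
      have := ha0 0
      have hC₁p : (0:ℝ) ≤ C₁ ^ p := (Real.rpow_pos_of_pos (by linarith) p).le
      positivity) (by
      have := ha0 0
      have hC₁p : (0:ℝ) ≤ C₁ ^ p := (Real.rpow_pos_of_pos (by linarith) p).le
      positivity) p hp0 hr0 hr1
    exact this
  have hΦac : ∀ n, Φ n * a n ≤ c n := by
    intro n
    have h1 : a n ≤ r ^ n * a 0 := hageo n
    have h2 : (C₁ * ((n:ℝ)+2)) ^ p = C₁ ^ p * ((n:ℝ)+2) ^ p :=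
      Real.mul_rpow (by linarith) (by positivity)
    calc Φ n * a n ≤ Φ n * (r ^ n * a 0) := mul_le_mul_of_nonneg_left h1 (hΦ0 n)
      _ = c n := by rw [hΦdef, hcdef]; simp only []; rw [h2]; ring
  set B : ℕ → ℝ≥0∞ := fun n => ENNReal.ofReal (c n) with hBdef
  have hBsum : ∑' n, B n ≠ ⊤ := by
    rw [hBdef, ← ENNReal.ofReal_tsum_of_nonneg hc_nonneg hcsum]
    exact ENNReal.ofReal_ne_top
  -- choose N
  set δ : ℝ := (b - 1) / 3 with hδdef
  have hδ0 : 0 < δ := by rw [hδdef]; linarith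
  set s₁ : ℝ := 1 + (b - 1) / 3 with hs₁def
  have hs₁1 : 1 < s₁ := by rw [hs₁def]; linarith
  have htail := ENNReal.tendsto_sum_nat_add B hBsum
  have hδ0' : (0:ℝ≥0∞) < ENNReal.ofReal δ := ENNReal.ofReal_pos.2 hδ0
  obtain ⟨N, hN⟩ := eventually_atTop.1 (htail.eventually (eventually_lt_nhds hδ0'))
  have hNtail : ∑' k, B (k + N) < ENNReal.ofReal δ := hN N le_rfl
  set ε : ℝ := t₁ / 2^N with hεdef
  have hε0 : 0 < ε := by positivity
  have hε1 : ε ≤ 1 := by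
    rw [hεdef]
    calc t₁ / 2^N ≤ t₁ / 1 := by
          apply div_le_div_of_nonneg_left ht₁0.le one_pos (one_le_pow₀ one_le_two)
      _ = t₁ := div_one t₁
      _ ≤ 1 := ht₁1
  set L : ℝ := L₁ + (N:ℝ) * Real.log 2 with hLdef
  have hL0 : 0 ≤ L := by
    rw [hLdef]
    have : (0:ℝ) ≤ (N:ℝ) := Nat.cast_nonneg N
    nlinarith
  have hlogε : -Real.log ε = L := by
    rw [hεdef, hLdef, Real.log_div ht₁0.ne' (by positivity), Real.log_pow, hL₁def]
    push_cast
    ring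
  -- eventual facts
  filter_upwards [eventually_ge_atTop (max u₀ 1),
    (Vf_shift hγ hP hL0).eventually (eventually_lt_nhds hs₁1),
    (Vf_tendsto_atTop hγ hP).eventually_gt_atTop 0] with u hu hshift hVu0
  have hu₀u : u₀ ≤ u := le_trans (le_max_left _ _) hu
  have hu1 : (1:ℝ) ≤ u := le_trans (le_max_right _ _) hu
  have hVfu0 : 0 < Vf P u := hVpos u hu₀u
  have hshift' : Vf P (u + L) ≤ s₁ * Vf P u := by
    rw [div_lt_iff₀ hVfu0] at hshift
    linarith
  refine ⟨hVfu0, ?_, ?_⟩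
  · -- lower bound
    have hwInt := w_integrable hw
    have hint1 : IntegrableOn (fun t => w t * Vf P u) (Ioc (0:ℝ) 1) := hwInt.mul_const _
    have hnn : 0 ≤ᵐ[volume.restrict (Ioc (0:ℝ) 1)] fun t => w t * Vf P u := by
      rw [EventuallyLE, ae_restrict_iff' measurableSet_Ioc]
      apply ae_of_all
      intro t ht
      exact mul_nonneg (hw.nonneg t ht) hVfu0.le
    have heq : ∫ t in Ioc (0:ℝ) 1, w t * Vf P u = Vf P u := by
      rw [integral_mul_const, hw.total, one_mul]
    calc ENNReal.ofReal (Vf P u) = ENNReal.ofReal (∫ t in Ioc (0:ℝ) 1, w t * Vf P u) := by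
          rw [heq]
      _ = ∫⁻ t in Ioc (0:ℝ) 1, ENNReal.ofReal (w t * Vf P u) :=
          ofReal_integral_eq_lintegral_ofReal hint1 hnn
      _ ≤ ∫⁻ t in Ioc (0:ℝ) 1, ENNReal.ofReal (w t * VaR P (Real.exp (-u) * t)) := by
          apply lintegral_mono_ae
          rw [ae_restrict_iff' measurableSet_Ioc]
          apply ae_of_all
          intro t ht
          apply ENNReal.ofReal_le_ofReal
          rw [VaR_eq_Vf ht.1]
          apply mul_le_mul_of_nonneg_left _ (hw.nonneg t ht)
          apply Vf_mono hγ hP (by linarith)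
          have : Real.log t ≤ 0 := Real.log_nonpos ht.1.le ht.2
          linarith
      _ = tailRisk w (Real.exp (-u)) P := rfl
  · -- upper bound
    have hwInt := w_integrable hw
    have hJ : tailRisk w (Real.exp (-u)) P =
        ∫⁻ t in Ioc (0:ℝ) 1, ENNReal.ofReal (w t * Vf P (u - Real.log t)) := by
      apply setLIntegral_congr_fun measurableSet_Ioc
      intro t ht
      simp only []
      rw [VaR_eq_Vf ht.1]
    rw [hJ]
    have hVuL0 : 0 ≤ Vf P (u + L) := (hVpos (u + L) (by linarith)).le
    have hsplit : Ioc (0:ℝ) 1 = Ioc 0 ε ∪ Ioc ε 1 := (Ioc_union_Ioc_eq_Ioc hε0.le hε1).symm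
    have hle1 : (∫⁻ t in Ioc (0:ℝ) 1, ENNReal.ofReal (w t * Vf P (u - Real.log t))) ≤
        (∫⁻ t in Ioc (0:ℝ) ε, ENNReal.ofReal (w t * Vf P (u - Real.log t))) +
        ∫⁻ t in Ioc ε 1, ENNReal.ofReal (w t * Vf P (u - Real.log t)) := by
      rw [hsplit]
      exact lintegral_union_le _ _ _
    have hbig : (∫⁻ t in Ioc ε 1, ENNReal.ofReal (w t * Vf P (u - Real.log t))) ≤
        ENNReal.ofReal (s₁ * Vf P u) := by
      have hg1 : (∫⁻ t in Ioc ε 1, ENNReal.ofReal (w t * Vf P (u - Real.log t))) ≤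
          ∫⁻ t in Ioc ε 1, ENNReal.ofReal (w t * Vf P (u + L)) := by
        apply lintegral_mono_ae
        rw [ae_restrict_iff' measurableSet_Ioc]
        apply ae_of_all
        intro t ht
        apply ENNReal.ofReal_le_ofReal
        have ht0 : 0 < t := lt_trans hε0 ht.1
        apply mul_le_mul_of_nonneg_left _ (hw.nonneg t ⟨ht0, ht.2⟩)
        have hlt : Real.log t ≤ 0 := Real.log_nonpos ht0.le ht.2
        apply Vf_mono hγ hP (by linarith)
        have h1 : Real.log ε ≤ Real.log t := Real.log_le_log hε0 ht.1.le
        linarith [hlogε, h1]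
      have hg2 : (∫⁻ t in Ioc ε 1, ENNReal.ofReal (w t * Vf P (u + L))) ≤
          ∫⁻ t in Ioc (0:ℝ) 1, ENNReal.ofReal (w t * Vf P (u + L)) :=
        lintegral_mono_set (fun t ht => ⟨lt_trans hε0 ht.1, ht.2⟩)
      have hint2 : IntegrableOn (fun t => w t * Vf P (u + L)) (Ioc (0:ℝ) 1) :=
        hwInt.mul_const _
      have hnn2 : 0 ≤ᵐ[volume.restrict (Ioc (0:ℝ) 1)] fun t => w t * Vf P (u + L) := by
        rw [EventuallyLE, ae_restrict_iff' measurableSet_Ioc]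
        apply ae_of_all
        intro t ht
        exact mul_nonneg (hw.nonneg t ht) hVuL0
      have hg3 : (∫⁻ t in Ioc (0:ℝ) 1, ENNReal.ofReal (w t * Vf P (u + L))) =
          ENNReal.ofReal (Vf P (u + L)) := by
        rw [← ofReal_integral_eq_lintegral_ofReal hint2 hnn2, integral_mul_const, hw.total,
          one_mul]
      calc (∫⁻ t in Ioc ε 1, ENNReal.ofReal (w t * Vf P (u - Real.log t)))
          ≤ ∫⁻ t in Ioc (0:ℝ) 1, ENNReal.ofReal (w t * Vf P (u + L)) := le_trans hg1 hg2
        _ = ENNReal.ofReal (Vf P (u + L)) := hg3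
        _ ≤ ENNReal.ofReal (s₁ * Vf P u) := ENNReal.ofReal_le_ofReal hshift'
    have hsmall : (∫⁻ t in Ioc (0:ℝ) ε, ENNReal.ofReal (w t * Vf P (u - Real.log t))) ≤
        ENNReal.ofReal (Vf P u) * ∑' k, B (k + N) := by
      have hcover : Ioc (0:ℝ) ε ⊆ ⋃ k : ℕ, Ioc (t₁ / 2^((k+N)+1)) (t₁ / 2^(k+N)) := by
        intro t ht
        have ht0 : 0 < t := ht.1
        have hex : ∃ k : ℕ, t₁ / 2^((k+N)+1) < t := by
          obtain ⟨m, hm⟩ := pow_unbounded_of_one_lt (t₁ / t) one_lt_two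
          refine ⟨m, ?_⟩
          have h1 : t₁ < t * 2^m := by
            rw [div_lt_iff₀ ht0] at hm
            linarith [hm]
          have h2 : (2:ℝ)^m ≤ 2^((m+N)+1) := pow_le_pow_right₀ one_le_two (by omega)
          rw [div_lt_iff₀ (by positivity)]
          calc t₁ < t * 2^m := h1
            _ ≤ t * 2^((m+N)+1) := mul_le_mul_of_nonneg_left h2 ht0.le
        have hk₀1 : t₁ / 2^((Nat.find hex + N)+1) < t := Nat.find_spec hex
        have hk₀2 : t ≤ t₁ / 2^(Nat.find hex + N) := by
          rcases Nat.eq_zero_or_pos (Nat.find hex) with h0 | hpos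
          · rw [h0, zero_add]
            exact ht.2
          · obtain ⟨k', hk'⟩ := Nat.exists_eq_succ_of_ne_zero hpos.ne'
            have hmin := Nat.find_min hex (m := k') (by omega)
            push_neg at hmin
            have : (k' + N) + 1 = Nat.find hex + N := by omega
            rwa [this] at hmin
        exact mem_iUnion.2 ⟨Nat.find hex, hk₀1, hk₀2⟩
      calc (∫⁻ t in Ioc (0:ℝ) ε, ENNReal.ofReal (w t * Vf P (u - Real.log t)))
          ≤ ∫⁻ t in ⋃ k : ℕ, Ioc (t₁ / 2^((k+N)+1)) (t₁ / 2^(k+N)),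
            ENNReal.ofReal (w t * Vf P (u - Real.log t)) := lintegral_mono_set hcover
        _ ≤ ∑' k : ℕ, ∫⁻ t in Ioc (t₁ / 2^((k+N)+1)) (t₁ / 2^(k+N)),
            ENNReal.ofReal (w t * Vf P (u - Real.log t)) := lintegral_iUnion_le _ _
        _ ≤ ∑' k : ℕ, ENNReal.ofReal (Vf P u) * B (k + N) := by
            apply ENNReal.tsum_le_tsum
            intro k
            have hIsub : Ioc (t₁ / 2^((k+N)+1)) (t₁ / 2^(k+N)) ⊆ Ioc (0:ℝ) 1 := by
              intro x hx
              refine ⟨lt_trans (by positivity) hx.1, le_trans hx.2 ?_⟩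
              calc t₁ / 2^(k+N) ≤ t₁ / 1 := by
                    apply div_le_div_of_nonneg_left ht₁0.le one_pos (one_le_pow₀ one_le_two)
                _ = t₁ := div_one t₁
                _ ≤ 1 := ht₁1
            have hΦV0 : 0 ≤ Φ (k+N) * Vf P u := mul_nonneg (hΦ0 _) hVfu0.le
            have h1 : (∫⁻ t in Ioc (t₁ / 2^((k+N)+1)) (t₁ / 2^(k+N)),
                ENNReal.ofReal (w t * Vf P (u - Real.log t))) ≤
                ∫⁻ t in Ioc (t₁ / 2^((k+N)+1)) (t₁ / 2^(k+N)),
                ENNReal.ofReal (w t * (Φ (k+N) * Vf P u)) := by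
              apply lintegral_mono_ae
              rw [ae_restrict_iff' measurableSet_Ioc]
              apply ae_of_all
              intro t ht
              apply ENNReal.ofReal_le_ofReal
              apply mul_le_mul_of_nonneg_left _ (hw.nonneg t (hIsub ht))
              exact hblock u hu₀u (k+N) t ht
            have hint3 : IntegrableOn (fun t => w t * (Φ (k+N) * Vf P u))
                (Ioc (t₁ / 2^((k+N)+1)) (t₁ / 2^(k+N))) :=
              (hwInt.mono_set hIsub).mul_const _
            have hnn3 : 0 ≤ᵐ[volume.restrict (Ioc (t₁ / 2^((k+N)+1)) (t₁ / 2^(k+N)))]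
                fun t => w t * (Φ (k+N) * Vf P u) := by
              rw [EventuallyLE, ae_restrict_iff' measurableSet_Ioc]
              apply ae_of_all
              intro t ht
              exact mul_nonneg (hw.nonneg t (hIsub ht)) hΦV0
            have h2 : (∫⁻ t in Ioc (t₁ / 2^((k+N)+1)) (t₁ / 2^(k+N)),
                ENNReal.ofReal (w t * (Φ (k+N) * Vf P u))) =
                ENNReal.ofReal (a (k+N) * (Φ (k+N) * Vf P u)) := by
              rw [← ofReal_integral_eq_lintegral_ofReal hint3 hnn3, integral_mul_const]
            have h3 : a (k+N) * (Φ (k+N) * Vf P u) = Vf P u * (Φ (k+N) * a (k+N)) := by ring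
            calc (∫⁻ t in Ioc (t₁ / 2^((k+N)+1)) (t₁ / 2^(k+N)),
                ENNReal.ofReal (w t * Vf P (u - Real.log t)))
                ≤ ENNReal.ofReal (a (k+N) * (Φ (k+N) * Vf P u)) := h2 ▸ h1
              _ = ENNReal.ofReal (Vf P u) * ENNReal.ofReal (Φ (k+N) * a (k+N)) := by
                  rw [h3, ENNReal.ofReal_mul hVfu0.le]
              _ ≤ ENNReal.ofReal (Vf P u) * B (k + N) := by
                  apply mul_le_mul_right
                  exact ENNReal.ofReal_le_ofReal (hΦac (k+N))
        _ = ENNReal.ofReal (Vf P u) * ∑' k, B (k + N) := ENNReal.tsum_mul_left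
    calc (∫⁻ t in Ioc (0:ℝ) 1, ENNReal.ofReal (w t * Vf P (u - Real.log t)))
        ≤ (∫⁻ t in Ioc (0:ℝ) ε, ENNReal.ofReal (w t * Vf P (u - Real.log t))) +
          ∫⁻ t in Ioc ε 1, ENNReal.ofReal (w t * Vf P (u - Real.log t)) := hle1
      _ ≤ ENNReal.ofReal (Vf P u) * ∑' k, B (k + N) + ENNReal.ofReal (s₁ * Vf P u) :=
          add_le_add hsmall hbig
      _ ≤ ENNReal.ofReal (Vf P u) * ENNReal.ofReal δ + ENNReal.ofReal (s₁ * Vf P u) := by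
          apply add_le_add_left
          exact mul_le_mul_right hNtail.le _
      _ = ENNReal.ofReal (Vf P u * δ + s₁ * Vf P u) := by
          rw [← ENNReal.ofReal_mul hVfu0.le, ← ENNReal.ofReal_add (by positivity)
            (mul_nonneg (by linarith) hVfu0.le)]
      _ ≤ ENNReal.ofReal (b * Vf P u) := by
          apply ENNReal.ofReal_le_ofReal
          rw [hδdef, hs₁def]
          nlinarith
lemma tailRisk_pos_facts [IsProbabilityMeasure P] (hγ : 0 < γ) (hP : WeibullTailed P γ)
    (hw : IsWeight w κ ℓ) :
    ∀ᶠ u in atTop, 0 < Vf P u ∧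
      Vf P u ≤ (tailRisk w (Real.exp (-u)) P).toReal := by
  filter_upwards [tailRisk_bounds hγ hP hw one_lt_two] with u ⟨h1, h2, h3⟩
  refine ⟨h1, ?_⟩
  have hne : tailRisk w (Real.exp (-u)) P ≠ ⊤ :=
    ne_top_of_le_ne_top ENNReal.ofReal_ne_top h3
  have := (ENNReal.toReal_le_toReal ENNReal.ofReal_ne_top hne).2 h2
  rwa [ENNReal.toReal_ofReal h1.le] at this

lemma tailRisk_ratio [IsProbabilityMeasure P] (hγ : 0 < γ) (hP : WeibullTailed P γ)
    (hw : IsWeight w κ ℓ) :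
    Tendsto (fun u => (tailRisk w (Real.exp (-u)) P).toReal / Vf P u) atTop (𝓝 1) := by
  rw [tendsto_order]
  constructor
  · intro a ha
    filter_upwards [tailRisk_pos_facts hγ hP hw] with u ⟨h1, h2⟩
    have : (1:ℝ) ≤ (tailRisk w (Real.exp (-u)) P).toReal / Vf P u := (one_le_div h1).2 h2
    linarith
  · intro b hb
    set b' : ℝ := (1 + b) / 2 with hb'def
    have hb'1 : 1 < b' := by rw [hb'def]; linarith
    have hb'b : b' < b := by rw [hb'def]; linarith
    filter_upwards [tailRisk_bounds hγ hP hw hb'1] with u ⟨h1, h2, h3⟩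
    have h4 : (tailRisk w (Real.exp (-u)) P).toReal ≤ b' * Vf P u :=
      ENNReal.toReal_le_of_le_ofReal (by positivity) h3
    calc (tailRisk w (Real.exp (-u)) P).toReal / Vf P u ≤ b' := by
          rw [div_le_iff₀ h1]; linarith [h4]
      _ < b := hb'b

end TWR

/-- if `P` has Weibull-type tails with index `γ`, then
`ρ_{1-β}(P) = (log(1/β))^{1/γ} ℓ₂(log(1/β))` for some slowly varying `ℓ₂`;
equivalently, `u ↦ u^{-1/γ} ρ_{1-e^{-u}}(P)` is slowly varying at infinity. -/
theorem tailRisk_regVary_of_weibullTailed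
    (w : ℝ → ℝ) (κ : ℝ) (ℓ : ℝ → ℝ) (hw : IsWeight w κ ℓ)
    (P : Measure ℝ) [IsProbabilityMeasure P]
    (γ : ℝ) (hγ : 0 < γ) (hP : WeibullTailed P γ) :
    RegVary (fun u : ℝ => u ^ (-(1 / γ)) * (tailRisk w (Real.exp (-u)) P).toReal) 0 := by
  intro x hx
  set g : ℝ → ℝ := fun u => (tailRisk w (Real.exp (-u)) P).toReal with hgdef
  have hmulx : Tendsto (fun u : ℝ => u * x) atTop atTop := tendsto_id.atTop_mul_const hx
  have h1 : Tendsto (fun u => g u / TWR.Vf P u) atTop (𝓝 1) := TWR.tailRisk_ratio hγ hP hw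
  have h1x : Tendsto (fun u => g (u * x) / TWR.Vf P (u * x)) atTop (𝓝 1) := h1.comp hmulx
  have h2 : Tendsto (fun u => TWR.Vf P (u * x) / TWR.Vf P u) atTop (𝓝 (x ^ (1/γ))) :=
    TWR.Vf_rv hγ hP hx
  have h3 : Tendsto (fun u => TWR.Vf P u / g u) atTop (𝓝 1) := by
    have := h1.inv₀ one_ne_zero
    simpa [inv_div] using this
  have hprod : Tendsto (fun u =>
      (g (u * x) / TWR.Vf P (u * x)) * (TWR.Vf P (u * x) / TWR.Vf P u) * (TWR.Vf P u / g u))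
      atTop (𝓝 (x ^ (1/γ))) := by
    have := (h1x.mul h2).mul h3
    simpa using this
  have hposf := TWR.tailRisk_pos_facts hγ hP hw
  have hgr : Tendsto (fun u => g (u * x) / g u) atTop (𝓝 (x ^ (1/γ))) := by
    apply hprod.congr'
    filter_upwards [hposf, hmulx.eventually hposf] with u ⟨hV, hg⟩ ⟨hVx, hgx⟩
    have hg0 : 0 < g u := lt_of_lt_of_le hV hg
    field_simp
  have hfinal : Tendsto (fun u => x ^ (-(1/γ)) * (g (u * x) / g u)) atTop (𝓝 (x ^ (0:ℝ))) := by
    have := hgr.const_mul (x ^ (-(1/γ)))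
    have he : x ^ (-(1/γ)) * x ^ (1/γ) = x ^ (0:ℝ) := by
      rw [← Real.rpow_add hx]
      norm_num
    rwa [he] at this
  apply hfinal.congr'
  filter_upwards [eventually_gt_atTop 0, hposf] with u hu ⟨hV, hg⟩
  have hg0 : 0 < g u := lt_of_lt_of_le hV hg
  have hux : (u * x) ^ (-(1/γ)) = u ^ (-(1/γ)) * x ^ (-(1/γ)) :=
    Real.mul_rpow hu.le hx.le
  have hu0 : (0:ℝ) < u ^ (-(1/γ)) := Real.rpow_pos_of_pos hu _
  show x ^ (-(1/γ)) * (g (u * x) / g u) =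
    (u * x) ^ (-(1/γ)) * g (u * x) / (u ^ (-(1/γ)) * g u)
  rw [hux]
  field_simp

end
end

section
/- Fix δ > 0 and let φ satisfy the smoothness assumption. (a) If φ(x) ~ x log x as x → ∞ and the probability measure P₀ on ℝ is either heavy-tailed with index γ > 1 or has Weibull-type tails with index γ < 1, then there exists a probability measure P₁ ∈ B_{φ,δ}(P₀) with ∫ max(z,0) dP₁(z) = ∞. (b) If instead φ is regularly varying with index p > 1 and P₀ is heavy-tailed with index γ satisfying 1 < γ < p/(p−1), then there exists P₁ ∈ B_{φ,δ}(P₀) with ∫ max(z,0) dP₁(z) = ∞. -/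
open MeasureTheory Filter Set
open scoped ENNReal NNReal Topology Classical

noncomputable section

-- ===== auxiliary lemmas =====

lemma survival_antitone (μ : Measure ℝ) [IsFiniteMeasure μ] : Antitone (survival μ) := by
  intro a b hab
  exact ENNReal.toReal_mono (measure_ne_top μ _) (measure_mono (Ioi_subset_Ioi hab))

lemma survival_nonneg (μ : Measure ℝ) (x : ℝ) : 0 ≤ survival μ x := ENNReal.toReal_nonneg

lemma survival_le_one (μ : Measure ℝ) [IsProbabilityMeasure μ] (x : ℝ) : survival μ x ≤ 1 := by
  rw [survival, show (1:ℝ) = (1:ℝ≥0∞).toReal from rfl]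
  exact ENNReal.toReal_mono ENNReal.one_ne_top prob_le_one

/-- if the survival function vanishes somewhere, both heavy-tail and Weibull-tail
ratios are eventually `0`. -/
lemma survival_pos_aux (μ : Measure ℝ) [IsFiniteMeasure μ] {x₀ : ℝ} (h0 : survival μ x₀ = 0) :
    ∀ t ≥ max x₀ 1, survival μ t = 0 ∧ survival μ (t * 2) = 0 := by
  intro t ht
  have hx₀ : x₀ ≤ t := le_trans (le_max_left _ _) ht
  have h1 : (1:ℝ) ≤ t := le_trans (le_max_right _ _) ht
  have h2 : t ≤ t * 2 := by linarith
  constructor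
  · exact le_antisymm (h0 ▸ survival_antitone μ hx₀) (survival_nonneg μ t)
  · exact le_antisymm (h0 ▸ survival_antitone μ (le_trans hx₀ h2)) (survival_nonneg μ _)

lemma survival_pos_of_heavy {μ : Measure ℝ} [IsFiniteMeasure μ] {γ : ℝ}
    (h : HeavyTailed μ γ) (x : ℝ) : 0 < survival μ x := by
  rcases lt_or_ge 0 (survival μ x) with h' | h'
  · exact h'
  exfalso
  have h0 : survival μ x = 0 := le_antisymm h' (survival_nonneg μ x)
  have hev : ∀ᶠ t in atTop, (fun t : ℝ => survival μ (t * 2) / survival μ t) t = 0 := by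
    filter_upwards [eventually_ge_atTop (max x 1)] with t ht
    rw [(survival_pos_aux μ h0 t ht).2, zero_div]
  have hlim : Tendsto (fun t : ℝ => survival μ (t * 2) / survival μ t) atTop (𝓝 0) := by
    rw [tendsto_congr' hev]
    exact tendsto_const_nhds
  have := tendsto_nhds_unique (h 2 two_pos) hlim
  exact absurd this (ne_of_gt (Real.rpow_pos_of_pos two_pos _))

lemma survival_pos_of_weibull {μ : Measure ℝ} [IsFiniteMeasure μ] {γ : ℝ} (hγ : 0 < γ)
    (h : WeibullTailed μ γ) (x : ℝ) : 0 < survival μ x := by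
  rcases lt_or_ge 0 (survival μ x) with h' | h'
  · exact h'
  exfalso
  have h0 : survival μ x = 0 := le_antisymm h' (survival_nonneg μ x)
  have hev : ∀ᶠ t in atTop, (fun t : ℝ => hazard μ (t * 2) / hazard μ t) t = 0 := by
    filter_upwards [eventually_ge_atTop (max x 1)] with t ht
    have := survival_pos_aux μ h0 t ht
    simp only [hazard, this.1, this.2, Real.log_zero, neg_zero, zero_div]
  have hlim : Tendsto (fun t : ℝ => hazard μ (t * 2) / hazard μ t) atTop (𝓝 0) := by
    rw [tendsto_congr' hev]
    exact tendsto_const_nhds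
  have := tendsto_nhds_unique (h 2 two_pos) hlim
  have h2γ : (0:ℝ) < 2 ^ γ := Real.rpow_pos_of_pos two_pos _
  exact absurd this (ne_of_gt h2γ)

lemma hazard_monotone {μ : Measure ℝ} [IsFiniteMeasure μ]
    (hpos : ∀ x, 0 < survival μ x) : Monotone (hazard μ) := by
  intro a b hab
  have := Real.log_le_log (hpos b) (survival_antitone μ hab)
  simp only [hazard]
  linarith

lemma hazard_nonneg {μ : Measure ℝ} [IsProbabilityMeasure μ] (x : ℝ) : 0 ≤ hazard μ x := by
  have := Real.log_nonpos (survival_nonneg μ x) (survival_le_one μ x)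
  simp only [hazard]; linarith

lemma survival_eq_exp_neg_hazard {μ : Measure ℝ} (hpos : ∀ x, 0 < survival μ x) (x : ℝ) :
    survival μ x = Real.exp (-(hazard μ x)) := by
  rw [hazard, neg_neg, Real.exp_log (hpos x)]

lemma hazard_tendsto_atTop {μ : Measure ℝ} [IsFiniteMeasure μ] {γ : ℝ} (hγ : 0 < γ)
    (h : WeibullTailed μ γ) (hpos : ∀ x, 0 < survival μ x) (h0 : ∀ x, 0 ≤ hazard μ x) :
    Tendsto (hazard μ) atTop atTop := by
  rcases tendsto_of_monotone (hazard_monotone hpos) with h' | ⟨l, hl⟩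
  · exact h'
  exfalso
  have h2γ : (1:ℝ) < 2 ^ γ := Real.one_lt_rpow_iff_of_pos two_pos |>.mpr (Or.inl ⟨one_lt_two, hγ⟩)
  have hl2 : Tendsto (fun t : ℝ => hazard μ (t * 2)) atTop (𝓝 l) := by
    apply hl.comp
    exact Tendsto.atTop_mul_const two_pos tendsto_id
  by_cases hl0 : l = 0
  · have hzero : ∀ x, hazard μ x = 0 := by
      intro x
      refine le_antisymm ?_ (h0 x)
      have := (hazard_monotone hpos).ge_of_tendsto hl x
      rw [hl0] at this; exact this
    have : Tendsto (fun t : ℝ => hazard μ (t * 2) / hazard μ t) atTop (𝓝 0) := by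
      simp only [hzero, zero_div]
      exact tendsto_const_nhds
    have := tendsto_nhds_unique (h 2 two_pos) this
    rw [this] at h2γ; norm_num at h2γ
  · have : Tendsto (fun t : ℝ => hazard μ (t * 2) / hazard μ t) atTop (𝓝 (l / l)) :=
      hl2.div hl hl0
    rw [div_self hl0] at this
    have := tendsto_nhds_unique (h 2 two_pos) this
    rw [this] at h2γ; norm_num at h2γ

/-- ratio bounds at the dyadic points `2^k`, eventually. -/
lemma seq_ratio {f : ℝ → ℝ} (hpos : ∀ x, 0 < f x) {r l u : ℝ} (hl : l < r) (hu : r < u)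
    (h : Tendsto (fun t : ℝ => f (t * 2) / f t) atTop (𝓝 r)) :
    ∃ K : ℕ, ∀ k ≥ K, l * f (2 ^ k) ≤ f (2 ^ (k + 1)) ∧ f (2 ^ (k + 1)) ≤ u * f (2 ^ k) := by
  have hev : ∀ᶠ t in atTop, f (t * 2) / f t ∈ Ioo l u :=
    h.eventually (Ioo_mem_nhds hl hu)
  rw [eventually_atTop] at hev
  obtain ⟨T, hT⟩ := hev
  have hpow : Tendsto (fun k : ℕ => (2:ℝ) ^ k) atTop atTop :=
    tendsto_pow_atTop_atTop_of_one_lt one_lt_two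
  obtain ⟨K, hK⟩ := (hpow.eventually_ge_atTop T).exists_forall_of_atTop
  refine ⟨K, fun k hk => ?_⟩
  have h2 := hT ((2:ℝ) ^ k) (hK k hk)
  have hfk : 0 < f (2 ^ k) := hpos _
  have hmul : (2:ℝ) ^ k * 2 = 2 ^ (k + 1) := (pow_succ 2 k).symm
  rw [hmul] at h2
  constructor
  · have := h2.1
    rw [lt_div_iff₀ hfk] at this
    linarith
  · have := h2.2
    rw [div_lt_iff₀ hfk] at this
    linarith

/-- chaining ratio bounds along a sequence. -/
lemma chain_bounds {g : ℕ → ℝ} {K : ℕ} {l u : ℝ} (hl0 : 0 ≤ l) (hu0 : 0 ≤ u)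
    (h : ∀ k ≥ K, l * g k ≤ g (k + 1) ∧ g (k + 1) ≤ u * g k) :
    ∀ k ≥ K, g K * l ^ (k - K) ≤ g k ∧ g k ≤ g K * u ^ (k - K) := by
  intro k hk
  induction k, hk using Nat.le_induction with
  | base => simp
  | succ n hn ih =>
    have hstep := h n hn
    have hsub : n + 1 - K = (n - K) + 1 := by omega
    rw [hsub, pow_succ, pow_succ]
    constructor
    · calc g K * (l ^ (n - K) * l) = l * (g K * l ^ (n - K)) := by ring
        _ ≤ l * g n := by
            apply mul_le_mul_of_nonneg_left ih.1 hl0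
        _ ≤ g (n + 1) := hstep.1
    · calc g (n + 1) ≤ u * g n := hstep.2
        _ ≤ u * (g K * u ^ (n - K)) := mul_le_mul_of_nonneg_left ih.2 hu0
        _ = g K * (u ^ (n - K) * u) := by ring

lemma tendsto_zero_of_halving {g : ℕ → ℝ} {K : ℕ} (hg0 : ∀ k, 0 ≤ g k)
    (h : ∀ k ≥ K, g (k + 1) ≤ 2⁻¹ * g k) :
    Tendsto g atTop (𝓝 0) := by
  have hchain := chain_bounds (g := g) (K := K) (l := 0) (u := 2⁻¹) le_rfl (by norm_num)
    (fun k hk => ⟨by simpa using hg0 (k+1), h k hk⟩)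
  apply squeeze_zero' (Filter.Eventually.of_forall hg0)
    (g := fun k => (g K * 2 ^ K) * (2⁻¹) ^ k)
  · filter_upwards [eventually_ge_atTop K] with k hk
    have h1 : g k ≤ g K * (2⁻¹ : ℝ) ^ (k - K) := (hchain k hk).2
    have h2 : (2⁻¹ : ℝ) ^ (k - K) = 2⁻¹ ^ k / 2⁻¹ ^ K := pow_sub₀ _ (by norm_num) hk
    rw [h2] at h1
    calc g k ≤ g K * (2⁻¹ ^ k / 2⁻¹ ^ K) := h1
      _ = (g K * 2 ^ K) * 2⁻¹ ^ k := by
          rw [inv_pow]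
          field_simp
          rw [mul_assoc, ← mul_pow]; norm_num
  · have := (tendsto_pow_atTop_nhds_zero_of_lt_one (by norm_num : (0:ℝ) ≤ 2⁻¹)
      (by norm_num : (2⁻¹:ℝ) < 1)).const_mul (g K * 2 ^ K)
    simpa using this

/-- `x * log x⁻¹ ≤ 2 √x` for `0 < x ≤ 1`. -/
lemma xlog_le_sqrt {x : ℝ} (hx : 0 < x) (hx1 : x ≤ 1) :
    x * Real.log x⁻¹ ≤ 2 * Real.sqrt x := by
  have hs : 0 < Real.sqrt x := Real.sqrt_pos.mpr hx
  have hlog : Real.log x⁻¹ = 2 * Real.log (Real.sqrt x)⁻¹ := by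
    rw [Real.log_inv, Real.log_inv, Real.log_sqrt hx.le]; ring
  have hb : Real.log (Real.sqrt x)⁻¹ ≤ (Real.sqrt x)⁻¹ - 1 :=
    Real.log_le_sub_one_of_pos (inv_pos.mpr hs)
  have hb2 : Real.log (Real.sqrt x)⁻¹ ≤ (Real.sqrt x)⁻¹ := by
    have : (0:ℝ) ≤ 1 := zero_le_one
    linarith
  calc x * Real.log x⁻¹ = 2 * (x * Real.log (Real.sqrt x)⁻¹) := by rw [hlog]; ring
    _ ≤ 2 * (x * (Real.sqrt x)⁻¹) := by
        apply mul_le_mul_of_nonneg_left _ (by norm_num)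
        exact mul_le_mul_of_nonneg_left hb2 hx.le
    _ = 2 * Real.sqrt x := by
        rw [← div_eq_mul_inv, Real.div_sqrt]


lemma sqrt_pow_eq {x : ℝ} (hx : 0 ≤ x) (n : ℕ) :
    Real.sqrt (x ^ n) = (Real.sqrt x) ^ n := by
  induction n with
  | zero => simp
  | succ n ih => rw [pow_succ, Real.sqrt_mul (pow_nonneg hx n), ih, pow_succ]

lemma tsum_shift {g : ℕ → ℝ} (n : ℕ) (hgs : Summable g) :
    Summable (fun k => if k < n then 0 else g (k - n)) ∧
    (∑' k, (if k < n then 0 else g (k - n))) = ∑' j, g j := by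
  set h : ℕ → ℝ := fun k => if k < n then 0 else g (k - n) with hh
  have hcomp : ∀ k, h (k + n) = g k := by
    intro k
    simp only [hh]
    rw [if_neg (by omega), Nat.add_sub_cancel]
  have hs : Summable h := (summable_nat_add_iff n).mp (hgs.congr fun k => (hcomp k).symm)
  refine ⟨hs, ?_⟩
  have hsum := Summable.sum_add_tsum_nat_add n hs
  have hz : (∑ i ∈ Finset.range n, h i) = 0 := by
    apply Finset.sum_eq_zero
    intro i hi
    simp only [hh]
    rw [if_pos (Finset.mem_range.mp hi)]
  rw [← hsum, hz, zero_add]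
  exact tsum_congr hcomp

lemma bound_on_Icc (φ : ℝ → ℝ) (hc : Continuous φ) (X : ℝ) :
    ∃ M, 0 ≤ M ∧ ∀ y ∈ Icc (0:ℝ) X, φ y ≤ M := by
  obtain ⟨C, hC⟩ := (isCompact_Icc (a := (0:ℝ)) (b := X)).exists_bound_of_continuousOn
    hc.continuousOn
  refine ⟨max C 0, le_max_right _ _, fun y hy => ?_⟩
  calc φ y ≤ |φ y| := le_abs_self _
    _ ≤ C := by simpa using hC y hy
    _ ≤ max C 0 := le_max_left _ _

lemma phiA_bound {φ : ℝ → ℝ} (hc : Continuous φ)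
    (hx : Tendsto (fun x : ℝ => φ x / (x * Real.log x)) atTop (𝓝 1)) :
    ∃ M, 0 ≤ M ∧ ∀ y : ℝ, 0 ≤ y → φ y ≤ M + 2 * (y * Real.log (1 + y)) := by
  have hev : ∀ᶠ x in atTop, φ x / (x * Real.log x) < 2 :=
    hx.eventually_lt_const (by norm_num)
  rw [eventually_atTop] at hev
  obtain ⟨X₀, hX₀⟩ := hev
  set X := max X₀ 2 with hX
  obtain ⟨M, hM0, hM⟩ := bound_on_Icc φ hc X
  refine ⟨M, hM0, fun y hy => ?_⟩
  have hlognn : 0 ≤ Real.log (1 + y) := Real.log_nonneg (by linarith)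
  rcases le_or_gt y X with h | h
  · have h1 := hM y ⟨hy, h⟩
    nlinarith
  · have hy2 : (2:ℝ) ≤ y := le_trans (le_max_right _ _) h.le
    have hpos : 0 < y * Real.log y := mul_pos (by linarith) (Real.log_pos (by linarith))
    have h2 := hX₀ y (le_trans (le_max_left _ _) h.le)
    rw [div_lt_iff₀ hpos] at h2
    have hlog : Real.log y ≤ Real.log (1 + y) := Real.log_le_log (by linarith) (by linarith)
    have h3 : y * Real.log y ≤ y * Real.log (1 + y) :=
      mul_le_mul_of_nonneg_left hlog (by linarith)
    linarith

lemma phiB_bound {φ : ℝ → ℝ} (hc : Continuous φ) (hconv : ConvexOn ℝ (Ici 0) φ)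
    (hsup : Tendsto (fun x : ℝ => φ x / x) atTop atTop)
    {r ppl : ℝ} (hppl : 0 < ppl) (hr1 : 1 < r) (hru : r < (2:ℝ) ^ ppl)
    (hrv : Tendsto (fun t : ℝ => φ (t * 2) / φ t) atTop (𝓝 r)) :
    ∃ M, 0 ≤ M ∧ ∃ C, 0 ≤ C ∧ ∀ y : ℝ, 0 ≤ y → φ y ≤ M + C * y ^ ppl := by
  have hteval : ∀ᶠ x : ℝ in atTop, x ≤ φ x := by
    filter_upwards [hsup.eventually_ge_atTop 1, eventually_gt_atTop (0:ℝ)] with x h1 h2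
    rw [le_div_iff₀ h2] at h1
    linarith
  rw [eventually_atTop] at hteval
  obtain ⟨X₁, hX₁⟩ := hteval
  have hevr : ∀ᶠ t : ℝ in atTop, φ (t * 2) / φ t ∈ Ioo 1 ((2:ℝ) ^ ppl) :=
    hrv.eventually (Ioo_mem_nhds hr1 hru)
  rw [eventually_atTop] at hevr
  obtain ⟨X₂, hX₂⟩ := hevr
  set X := max (max X₁ X₂) 1 with hXdef
  have hX1 : (1:ℝ) ≤ X := le_max_right _ _
  have hXpos : (0:ℝ) < X := by linarith
  have hφX : ∀ j : ℕ, X ≤ 2 ^ j * X := by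
    intro j
    nlinarith [one_le_pow₀ (one_le_two (α := ℝ)) (n := j)]
  have hφpos : ∀ j : ℕ, 0 < φ (2 ^ j * X) := by
    intro j
    have := hX₁ (2 ^ j * X) (le_trans (le_trans (le_max_left _ _) (le_max_left _ _)) (hφX j))
    nlinarith [hφX j]
  have hratio : ∀ j : ℕ, φ (2 ^ j * X) ≤ φ (2 ^ (j+1) * X) ∧
      φ (2 ^ (j+1) * X) ≤ (2:ℝ) ^ ppl * φ (2 ^ j * X) := by
    intro j
    have hXX₂ : X₂ ≤ 2 ^ j * X := le_trans (le_trans (le_max_right _ _) (le_max_left _ _)) (hφX j)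
    have h2 := hX₂ (2 ^ j * X) hXX₂
    have heq : 2 ^ j * X * 2 = 2 ^ (j+1) * X := by ring
    rw [heq] at h2
    constructor
    · have := h2.1
      rw [lt_div_iff₀ (hφpos j)] at this
      linarith
    · have := h2.2
      rw [div_lt_iff₀ (hφpos j)] at this
      linarith
  have hchain : ∀ j : ℕ, φ (2 ^ j * X) ≤ φ X * ((2:ℝ) ^ ppl) ^ j := by
    intro j
    induction j with
    | zero => simp
    | succ n ih =>
      calc φ (2 ^ (n+1) * X) ≤ (2:ℝ) ^ ppl * φ (2 ^ n * X) := (hratio n).2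
        _ ≤ (2:ℝ) ^ ppl * (φ X * ((2:ℝ) ^ ppl) ^ n) := by
            apply mul_le_mul_of_nonneg_left ih (Real.rpow_nonneg (by norm_num) _)
        _ = φ X * ((2:ℝ) ^ ppl) ^ (n+1) := by ring
  obtain ⟨M, hM0, hM⟩ := bound_on_Icc φ hc X
  have hφXpos : 0 < φ X := by
    have := hφpos 0
    simpa using this
  set C := φ X * (2:ℝ) ^ ppl / X ^ ppl with hC
  have hC0 : 0 ≤ C := by
    apply div_nonneg (mul_nonneg hφXpos.le (Real.rpow_nonneg (by norm_num) _))
    exact Real.rpow_nonneg hXpos.le _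
  refine ⟨M, hM0, C, hC0, fun y hy => ?_⟩
  rcases le_or_gt y X with h | h
  · have h1 := hM y ⟨hy, h⟩
    have : 0 ≤ C * y ^ ppl := mul_nonneg hC0 (Real.rpow_nonneg hy _)
    linarith
  · -- y > X
    have hyX : 1 ≤ y / X := (one_le_div hXpos).mpr h.le
    obtain ⟨n, hn1, hn2⟩ := exists_nat_pow_near hyX one_lt_two
    have ha : (2:ℝ) ^ n * X ≤ y := by
      rw [← le_div_iff₀ hXpos] at *
      linarith [hn1]
    have hb : y ≤ 2 ^ (n+1) * X := by
      rw [← div_le_iff₀ hXpos]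
      exact hn2.le
    have hseg : y ∈ segment ℝ ((2:ℝ) ^ n * X) ((2:ℝ) ^ (n+1) * X) := by
      rw [segment_eq_Icc (le_trans ha hb)]
      exact ⟨ha, hb⟩
    have hmem1 : (2:ℝ) ^ n * X ∈ Ici (0:ℝ) := mem_Ici.mpr (by positivity)
    have hmem2 : (2:ℝ) ^ (n+1) * X ∈ Ici (0:ℝ) := mem_Ici.mpr (by positivity)
    have hle := hconv.le_on_segment hmem1 hmem2 hseg
    have hmax : max (φ ((2:ℝ) ^ n * X)) (φ ((2:ℝ) ^ (n+1) * X)) = φ ((2:ℝ) ^ (n+1) * X) :=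
      max_eq_right (hratio n).1
    rw [hmax] at hle
    have hpow : ((2:ℝ) ^ ppl) ^ (n+1) ≤ 2 ^ ppl * (y / X) ^ ppl := by
      have h1 : ((2:ℝ) ^ ppl) ^ (n+1) = 2 ^ ppl * ((2:ℝ) ^ ppl) ^ n := by ring
      have h2 : ((2:ℝ) ^ ppl) ^ n = ((2:ℝ) ^ n) ^ ppl := by
        rw [← Real.rpow_natCast ((2:ℝ) ^ ppl) n, ← Real.rpow_mul (by norm_num),
          ← Real.rpow_natCast (2:ℝ) n, ← Real.rpow_mul (by norm_num), mul_comm]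
      have h3 : ((2:ℝ) ^ n) ^ ppl ≤ (y / X) ^ ppl :=
        Real.rpow_le_rpow (by positivity) hn1 hppl.le
      rw [h1, h2]
      have : (0:ℝ) ≤ 2 ^ ppl := Real.rpow_nonneg (by norm_num) _
      nlinarith
    calc φ y ≤ φ ((2:ℝ) ^ (n+1) * X) := hle
      _ ≤ φ X * ((2:ℝ) ^ ppl) ^ (n+1) := hchain (n+1)
      _ ≤ φ X * (2 ^ ppl * (y / X) ^ ppl) := mul_le_mul_of_nonneg_left hpow hφXpos.le
      _ = C * y ^ ppl := by
          rw [hC, Real.div_rpow hy hXpos.le]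
          field_simp
      _ ≤ M + C * y ^ ppl := by linarith

lemma termA_bound {φ : ℝ → ℝ} {M Q P m L : ℝ} (hM : 0 ≤ M)
    (hbound : ∀ y : ℝ, 0 ≤ y → φ y ≤ M + 2 * (y * Real.log (1 + y)))
    (hQ1 : Q ≤ 1) (hQpos : 0 < Q) (hp0 : 0 ≤ P) (hp1 : P ≤ 1)
    (hm0 : 0 ≤ m) (hm1 : m ≤ 1) (hL0 : 0 ≤ L)
    (hlogQ : Real.log Q⁻¹ ≤ Real.log 2 + L) :
    Q * φ (1 - m + P / Q) ≤ (M + 2 * Real.log 3) * Q + 4 * Real.sqrt Q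
      + 2 * P * (Real.log 3 + Real.log 2 + L) := by
  have hPQ : 0 ≤ P / Q := div_nonneg hp0 hQpos.le
  set y := 1 - m + P / Q with hy
  have hy0 : 0 ≤ y := by rw [hy]; linarith
  have h1 := hbound y hy0
  have hQy : Q * y = Q * (1 - m) + P := by
    rw [hy]; field_simp
  have h1y : (0:ℝ) < 1 + y := by linarith
  have hyb : 1 + y ≤ 3 / Q := by
    have h2 : (2:ℝ) ≤ 2 / Q := by rw [le_div_iff₀ hQpos]; linarith
    have h3 : P / Q ≤ 1 / Q := by gcongr
    have h4 : (2:ℝ) / Q + 1 / Q = 3 / Q := by ring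
    rw [hy]; linarith
  have hlog1 : Real.log (1 + y) ≤ Real.log 3 + Real.log Q⁻¹ := by
    calc Real.log (1 + y) ≤ Real.log (3 / Q) := Real.log_le_log h1y hyb
      _ = Real.log 3 + Real.log Q⁻¹ := by
          rw [div_eq_mul_inv, Real.log_mul (by norm_num) (by positivity)]
  have hlognn : 0 ≤ Real.log (1 + y) := Real.log_nonneg (by linarith)
  have hlogQ0 : 0 ≤ Real.log Q⁻¹ := Real.log_nonneg (one_le_inv_iff₀.mpr ⟨hQpos, hQ1⟩)
  have hlog3 : (0:ℝ) ≤ Real.log 3 := Real.log_nonneg (by norm_num)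
  have hstep : Q * φ y ≤ Q * M + 2 * (Q * (1 - m) + P) * Real.log (1 + y) := by
    calc Q * φ y ≤ Q * (M + 2 * (y * Real.log (1 + y))) :=
          mul_le_mul_of_nonneg_left h1 hQpos.le
      _ = Q * M + 2 * (Q * y) * Real.log (1 + y) := by ring
      _ = Q * M + 2 * (Q * (1 - m) + P) * Real.log (1 + y) := by rw [hQy]
  have hcoef : 0 ≤ Q * (1 - m) + P := by nlinarith
  have h4 : 2 * (Q * (1 - m) + P) * Real.log (1 + y)
      ≤ 2 * (Q * (1 - m) + P) * (Real.log 3 + Real.log Q⁻¹) :=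
    mul_le_mul_of_nonneg_left hlog1 (by linarith)
  have h5 : Q * (1 - m) * (Real.log 3 + Real.log Q⁻¹) ≤ Q * (Real.log 3 + Real.log Q⁻¹) := by
    apply mul_le_mul_of_nonneg_right _ (by linarith)
    nlinarith
  have h6 : Q * Real.log Q⁻¹ ≤ 2 * Real.sqrt Q := xlog_le_sqrt hQpos hQ1
  have h7 : P * Real.log Q⁻¹ ≤ P * (Real.log 2 + L) :=
    mul_le_mul_of_nonneg_left hlogQ hp0
  nlinarith [hstep, h4, h5, h6, h7]

lemma pow_lt_pow_of_lt {i j : ℕ} (h : i < j) : ((2:ℝ)^(i+1)) ≤ (2:ℝ)^j :=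
  pow_le_pow_right₀ one_le_two h

lemma Adis : Pairwise (Function.onFun Disjoint (fun k => Ioc ((2:ℝ)^k) ((2:ℝ)^(k+1)))) := by
  have key : ∀ i j : ℕ, i < j →
      Disjoint (Ioc ((2:ℝ)^i) ((2:ℝ)^(i+1))) (Ioc ((2:ℝ)^j) ((2:ℝ)^(j+1))) := by
    intro i j hij
    rw [Set.disjoint_left]
    rintro x ⟨-, hx2⟩ ⟨hx3, -⟩
    have : ((2:ℝ)^(i+1)) ≤ (2:ℝ)^j := pow_le_pow_right₀ one_le_two hij
    linarith
  intro i j hij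
  rcases lt_or_gt_of_ne hij with h | h
  · exact key i j h
  · exact (key j i h).symm

lemma master (φ : ℝ → ℝ) (δ : ℝ)
    (hφ0 : ∀ x : ℝ, 0 ≤ x → 0 ≤ φ x)
    (μ : Measure ℝ) [IsProbabilityMeasure μ]
    (p : ℕ → ℝ) (hp0 : ∀ k, 0 ≤ p k) (hps : Summable p)
    (hm : ∑' j, p j ≤ 2⁻¹)
    (hq : ∀ k, p k ≠ 0 → μ (Ioc ((2:ℝ)^k) ((2:ℝ)^(k+1))) ≠ 0)
    (hmean : ¬ Summable (fun k => p k * 2^k))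
    (hFs : Summable (fun k => (μ (Ioc ((2:ℝ)^k) ((2:ℝ)^(k+1)))).toReal *
        φ ((1 - ∑' j, p j) + p k / (μ (Ioc ((2:ℝ)^k) ((2:ℝ)^(k+1)))).toReal)))
    (hdiv : φ (1 - ∑' j, p j) + ∑' k, ((μ (Ioc ((2:ℝ)^k) ((2:ℝ)^(k+1)))).toReal *
        φ ((1 - ∑' j, p j) + p k / (μ (Ioc ((2:ℝ)^k) ((2:ℝ)^(k+1)))).toReal)) ≤ δ) :
    ∃ P₁ ∈ phiBall φ δ μ, (∫⁻ z, ENNReal.ofReal (max z 0) ∂P₁) = ⊤ := by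
  classical
  set A : ℕ → Set ℝ := fun k => Ioc ((2:ℝ)^k) ((2:ℝ)^(k+1)) with hAdef
  set q : ℕ → ℝ≥0∞ := fun k => μ (A k) with hqdef
  set m : ℝ := ∑' j, p j with hmdef
  have hm0 : 0 ≤ m := tsum_nonneg hp0
  have hm1 : m ≤ 1 := le_trans hm (by norm_num)
  have h1m0 : (0:ℝ) ≤ 1 - m := by linarith
  have hAmeas : ∀ k, MeasurableSet (A k) := fun k => measurableSet_Ioc
  have hAdis : Pairwise (Function.onFun Disjoint A) := Adis
  have hqfin : ∀ k, q k ≠ ⊤ := fun k => measure_ne_top μ _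
  set d : ℕ → ℝ≥0∞ := fun k => ENNReal.ofReal (p k) / q k with hddef
  have hdfin : ∀ k, d k ≠ ⊤ := by
    intro k
    by_cases hp : p k = 0
    · simp [hddef, hp]
    · simp only [hddef, Ne, ENNReal.div_eq_top]
      push_neg
      exact ⟨fun _ => hq k hp, fun h => absurd h ENNReal.ofReal_ne_top⟩
  have hdq : ∀ k, d k * q k = ENNReal.ofReal (p k) := by
    intro k
    by_cases hp : p k = 0
    · simp [hddef, hp]
    · exact ENNReal.div_mul_cancel (hq k hp) (hqfin k)
  set f : ℝ → ℝ≥0∞ :=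
    fun x => ENNReal.ofReal (1 - m) + ∑' k, d k * (A k).indicator (1 : ℝ → ℝ≥0∞) x
    with hfdef
  have hfmeas : Measurable f := by
    refine Measurable.add (f := fun _ : ℝ => ENNReal.ofReal (1 - m))
      (g := fun x => ∑' k, d k * (A k).indicator (1 : ℝ → ℝ≥0∞) x) measurable_const ?_
    apply Measurable.ennreal_tsum
    intro k
    exact (measurable_one.indicator (hAmeas k)).const_mul (d k)
  have hf_off : ∀ x, x ∉ (⋃ k, A k) → f x = ENNReal.ofReal (1 - m) := by
    intro x hx
    have hz : ∀ k, d k * (A k).indicator (1 : ℝ → ℝ≥0∞) x = 0 := by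
      intro k
      rw [Set.indicator_of_notMem (fun h => hx (Set.mem_iUnion.mpr ⟨k, h⟩)), mul_zero]
    simp only [hfdef]
    rw [tsum_congr hz, tsum_zero, add_zero]
  have hf_on : ∀ k x, x ∈ A k → f x = ENNReal.ofReal (1 - m) + d k := by
    intro k x hx
    have hz : ∑' j, d j * (A j).indicator (1 : ℝ → ℝ≥0∞) x = d k := by
      rw [tsum_eq_single k]
      · rw [Set.indicator_of_mem hx]; simp
      · intro j hj
        rw [Set.indicator_of_notMem, mul_zero]
        intro hxj
        exact hj (Pairwise.eq hAdis (Set.not_disjoint_iff.mpr ⟨x, hxj, hx⟩))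
    simp only [hfdef]
    rw [hz]
  set P₁ := μ.withDensity f with hP₁def
  have hterm : ∀ k, ∫⁻ x, d k * (A k).indicator (1 : ℝ → ℝ≥0∞) x ∂μ
      = ENNReal.ofReal (p k) := by
    intro k
    rw [lintegral_const_mul _ (measurable_one.indicator (hAmeas k)),
      lintegral_indicator_one (hAmeas k), hdq]
  have hint : ∫⁻ x, f x ∂μ = 1 := by
    simp only [hfdef]
    rw [lintegral_add_left measurable_const, lintegral_const, measure_univ, mul_one,
      lintegral_tsum (fun k => ((measurable_one.indicator (hAmeas k)).const_mul (d k)).aemeasurable)]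
    rw [tsum_congr hterm, ← ENNReal.ofReal_tsum_of_nonneg hp0 hps, ← hmdef,
      ← ENNReal.ofReal_add h1m0 hm0]
    norm_num
  have hP₁prob : IsProbabilityMeasure P₁ := by
    constructor
    rw [hP₁def, withDensity_apply _ MeasurableSet.univ, setLIntegral_univ, hint]
  -- infinite mean
  have hmean' : ∫⁻ z, ENNReal.ofReal (max z 0) ∂P₁ = ⊤ := by
    have hgmeas : Measurable (fun z : ℝ => ENNReal.ofReal (max z 0)) :=
      (measurable_id.max measurable_const).ennreal_ofReal
    rw [hP₁def, lintegral_withDensity_eq_lintegral_mul μ hfmeas hgmeas]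
    have htop : (∑' k, ENNReal.ofReal (p k * 2 ^ k)) = ⊤ := by
      by_contra h
      apply hmean
      have hsum : Summable (fun k => Real.toNNReal (p k * 2 ^ k)) :=
        ENNReal.tsum_coe_ne_top_iff_summable.mp h
      have := NNReal.summable_coe.mpr hsum
      refine this.congr fun k => ?_
      exact Real.coe_toNNReal _ (mul_nonneg (hp0 k) (by positivity))
    rw [eq_top_iff, ← htop]
    have hstep : ∀ k, ENNReal.ofReal (p k * 2 ^ k) ≤
        ∫⁻ x in A k, (fun x => f x * ENNReal.ofReal (max x 0)) x ∂μ := by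
      intro k
      have hconst : ∫⁻ _ in A k, d k * ENNReal.ofReal ((2:ℝ)^k) ∂μ
          = d k * ENNReal.ofReal ((2:ℝ)^k) * q k := by
        rw [setLIntegral_const]
      have hle : ∀ x ∈ A k, d k * ENNReal.ofReal ((2:ℝ)^k) ≤ f x * ENNReal.ofReal (max x 0) := by
        intro x hx
        have hfx : d k ≤ f x := by rw [hf_on k x hx]; exact le_add_self
        have hgx : ENNReal.ofReal ((2:ℝ)^k) ≤ ENNReal.ofReal (max x 0) := by
          apply ENNReal.ofReal_le_ofReal
          exact le_max_of_le_left hx.1.le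
        exact mul_le_mul' hfx hgx
      calc ENNReal.ofReal (p k * 2 ^ k)
          = d k * ENNReal.ofReal ((2:ℝ)^k) * q k := by
            rw [mul_comm (d k), mul_assoc, hdq, ← ENNReal.ofReal_mul (by positivity), mul_comm]
        _ = ∫⁻ _ in A k, d k * ENNReal.ofReal ((2:ℝ)^k) ∂μ := hconst.symm
        _ ≤ ∫⁻ x in A k, (fun x => f x * ENNReal.ofReal (max x 0)) x ∂μ :=
            setLIntegral_mono' (hAmeas k) hle
    calc (∑' k, ENNReal.ofReal (p k * 2 ^ k))
        ≤ ∑' k, ∫⁻ x in A k, (fun x => f x * ENNReal.ofReal (max x 0)) x ∂μ :=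
          ENNReal.tsum_le_tsum hstep
      _ = ∫⁻ x in ⋃ k, A k, (fun x => f x * ENNReal.ofReal (max x 0)) x ∂μ :=
          (lintegral_iUnion hAmeas hAdis _).symm
      _ ≤ ∫⁻ x, (fun x => f x * ENNReal.ofReal (max x 0)) x ∂μ := setLIntegral_le_lintegral _ _
      _ = ∫⁻ x, ((f * fun z : ℝ => ENNReal.ofReal (max z 0)) x) ∂μ := rfl
  -- divergence
  have habs : P₁ ≪ μ := withDensity_absolutelyContinuous μ f
  have hrn : P₁.rnDeriv μ =ᵐ[μ] f := Measure.rnDeriv_withDensity μ hfmeas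
  have hdiv' : phiDiv φ P₁ μ ≤ ENNReal.ofReal δ := by
    rw [phiDiv, if_pos habs]
    have hcong : ∫⁻ x, ENNReal.ofReal (φ (P₁.rnDeriv μ x).toReal) ∂μ
        = ∫⁻ x, ENNReal.ofReal (φ (f x).toReal) ∂μ := by
      apply lintegral_congr_ae
      filter_upwards [hrn] with x hx
      simp only [hx]
    rw [hcong]
    have hU : MeasurableSet (⋃ k, A k) := MeasurableSet.iUnion hAmeas
    rw [← lintegral_add_compl (fun x => ENNReal.ofReal (φ (f x).toReal)) hU]
    have hcompl : ∫⁻ x in (⋃ k, A k)ᶜ, ENNReal.ofReal (φ (f x).toReal) ∂μ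
        ≤ ENNReal.ofReal (φ (1 - m)) := by
      have : ∀ x ∈ (⋃ k, A k)ᶜ, ENNReal.ofReal (φ (f x).toReal)
          ≤ ENNReal.ofReal (φ (1 - m)) := by
        intro x hx
        rw [hf_off x hx, ENNReal.toReal_ofReal h1m0]
      calc ∫⁻ x in (⋃ k, A k)ᶜ, ENNReal.ofReal (φ (f x).toReal) ∂μ
          ≤ ∫⁻ _ in (⋃ k, A k)ᶜ, ENNReal.ofReal (φ (1 - m)) ∂μ :=
            setLIntegral_mono' hU.compl this
        _ = ENNReal.ofReal (φ (1 - m)) * μ (⋃ k, A k)ᶜ := setLIntegral_const _ _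
        _ ≤ ENNReal.ofReal (φ (1 - m)) * 1 := mul_le_mul_right prob_le_one _
        _ = ENNReal.ofReal (φ (1 - m)) := mul_one _
    have hUint : ∫⁻ x in ⋃ k, A k, ENNReal.ofReal (φ (f x).toReal) ∂μ
        = ∑' k, ENNReal.ofReal ((q k).toReal * φ ((1 - m) + p k / (q k).toReal)) := by
      rw [lintegral_iUnion hAmeas hAdis]
      congr 1
      funext k
      have hval : ∀ x ∈ A k, ENNReal.ofReal (φ (f x).toReal)
          = ENNReal.ofReal (φ ((1 - m) + p k / (q k).toReal)) := by
        intro x hx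
        rw [hf_on k x hx]
        congr 2
        rw [ENNReal.toReal_add ENNReal.ofReal_ne_top (hdfin k), ENNReal.toReal_ofReal h1m0]
        congr 1
        rw [hddef]
        simp only
        rw [ENNReal.toReal_div, ENNReal.toReal_ofReal (hp0 k)]
      rw [setLIntegral_congr_fun (hAmeas k) hval,
        setLIntegral_const]
      rw [ENNReal.ofReal_mul ENNReal.toReal_nonneg, ENNReal.ofReal_toReal (hqfin k), mul_comm]
    rw [hUint]
    have hsum : (∑' k, ENNReal.ofReal ((q k).toReal * φ ((1 - m) + p k / (q k).toReal)))
        = ENNReal.ofReal (∑' k, (q k).toReal * φ ((1 - m) + p k / (q k).toReal)) := by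
      rw [ENNReal.ofReal_tsum_of_nonneg (fun k => ?_) hFs]
      apply mul_nonneg ENNReal.toReal_nonneg
      apply hφ0
      have : 0 ≤ p k / (q k).toReal := div_nonneg (hp0 k) ENNReal.toReal_nonneg
      linarith
    rw [hsum]
    calc ENNReal.ofReal (∑' k, (q k).toReal * φ ((1 - m) + p k / (q k).toReal))
          + ∫⁻ x in (⋃ k, A k)ᶜ, ENNReal.ofReal (φ (f x).toReal) ∂μ
        ≤ ENNReal.ofReal (∑' k, (q k).toReal * φ ((1 - m) + p k / (q k).toReal))
          + ENNReal.ofReal (φ (1 - m)) := add_le_add_right hcompl _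
      _ = ENNReal.ofReal (φ (1 - m) + ∑' k, (q k).toReal * φ ((1 - m) + p k / (q k).toReal)) := by
          rw [← ENNReal.ofReal_add ?h1 (hφ0 _ h1m0), add_comm]
          case h1 =>
            apply tsum_nonneg
            intro k
            apply mul_nonneg ENNReal.toReal_nonneg
            apply hφ0
            have : 0 ≤ p k / (q k).toReal := div_nonneg (hp0 k) ENNReal.toReal_nonneg
            linarith
      _ ≤ ENNReal.ofReal δ := ENNReal.ofReal_le_ofReal hdiv
  exact ⟨P₁, ⟨hP₁prob, hdiv'⟩, hmean'⟩


lemma Q_eq (μ : Measure ℝ) [IsFiniteMeasure μ] {a b : ℝ} (hab : a ≤ b) :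
    (μ (Ioc a b)).toReal = survival μ a - survival μ b := by
  have hu : Ioc a b ∪ Ioi b = Ioi a := Ioc_union_Ioi_eq_Ioi hab
  have hd : Disjoint (Ioc a b) (Ioi b) := by
    rw [Set.disjoint_left]; rintro x ⟨-, h1⟩ h2; exact absurd h1 (not_le.mpr h2)
  have hm := measure_union (μ := μ) hd measurableSet_Ioi
  rw [hu] at hm
  rw [survival, survival, hm, ENNReal.toReal_add (measure_ne_top μ _) (measure_ne_top μ _)]
  ring

set_option maxHeartbeats 1000000 in
lemma caseA_common (φ : ℝ → ℝ) (δ : ℝ) (hδ : 0 < δ)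
    (hφc : Continuous φ) (hφ1 : φ 1 = 0) (hφ0 : ∀ x : ℝ, 0 ≤ x → 0 ≤ φ x)
    (M : ℝ) (hM0 : 0 ≤ M)
    (hbound : ∀ y : ℝ, 0 ≤ y → φ y ≤ M + 2 * (y * Real.log (1 + y)))
    (μ : Measure ℝ) [IsProbabilityMeasure μ]
    (hpos : ∀ x, 0 < survival μ x)
    (K : ℕ)
    (hhalf : ∀ k ≥ K, survival μ ((2:ℝ) ^ (k+1)) ≤ 2⁻¹ * survival μ ((2:ℝ) ^ k))
    (L : ℕ → ℝ) (hL0 : ∀ k, 0 ≤ L k)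
    (hLb : ∀ k ≥ K, Real.log (survival μ ((2:ℝ) ^ k))⁻¹ ≤ L k)
    (hLs : Summable (fun k => (2⁻¹ : ℝ) ^ k * L k)) :
    ∃ P₁ ∈ phiBall φ δ μ, (∫⁻ z, ENNReal.ofReal (max z 0) ∂P₁) = ⊤ := by
  classical
  set S : ℕ → ℝ := fun k => survival μ ((2:ℝ) ^ k) with hSdef
  set Q : ℕ → ℝ := fun k => (μ (Ioc ((2:ℝ)^k) ((2:ℝ)^(k+1)))).toReal with hQdef
  have hQS : ∀ k, Q k = S k - S (k+1) := by
    intro k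
    rw [hQdef, hSdef]
    exact Q_eq μ (pow_le_pow_right₀ one_le_two (Nat.le_succ k))
  have hSpos : ∀ k, 0 < S k := fun k => hpos _
  have hS1 : ∀ k, S k ≤ 1 := fun k => survival_le_one μ _
  have hQhalf : ∀ k ≥ K, S k / 2 ≤ Q k := by
    intro k hk
    have := hhalf k hk
    rw [hQS k]
    simp only [hSdef] at this ⊢
    linarith
  have hQ1 : ∀ k, Q k ≤ 1 := by
    intro k
    rw [hQS k]
    have := hSpos (k+1)
    have := hS1 k
    linarith
  have hQ0 : ∀ k, 0 ≤ Q k := fun k => ENNReal.toReal_nonneg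
  have hSchain : ∀ k ≥ K, ∀ j ≥ k, S j ≤ S k * 2⁻¹ ^ (j - k) := by
    intro k hk j hj
    refine (chain_bounds (g := S) (K := k) (l := 0) (u := 2⁻¹) le_rfl (by norm_num)
      (fun i hi => ⟨by simpa using (hSpos (i+1)).le, hhalf i (le_trans hk hi)⟩) j hj).2
  have hS0 : Tendsto S atTop (𝓝 0) :=
    tendsto_zero_of_halving (fun k => (hSpos k).le) hhalf
  -- choose k₁
  have hsq : Tendsto (fun n => Real.sqrt (S n)) atTop (𝓝 0) := by
    have := (Real.continuous_sqrt.tendsto 0).comp hS0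
    simpa [Function.comp_def] using this
  have hψ : Tendsto (fun n => (M + 2 * Real.log 3) * (2 * S n) + 16 * Real.sqrt (S n))
      atTop (𝓝 0) := by
    have h1 := (hS0.const_mul (2 * (M + 2 * Real.log 3)))
    have h2 := hsq.const_mul 16
    have := h1.add h2
    simp only [mul_zero, add_zero] at this
    convert this using 2 with n
    ring
  have hev : ∀ᶠ n in atTop, ((M + 2 * Real.log 3) * (2 * S n) + 16 * Real.sqrt (S n)) < δ/4 :=
    hψ.eventually_lt_const (by linarith)
  obtain ⟨k₁, hk₁⟩ := ((hev.and (eventually_ge_atTop K)).exists_forall_of_atTop)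
  have hk₁K : K ≤ k₁ := (hk₁ k₁ le_rfl).2
  have hk₁ψ : (M + 2 * Real.log 3) * (2 * S k₁) + 16 * Real.sqrt (S k₁) < δ/4 :=
    (hk₁ k₁ le_rfl).1
  -- weights
  set W : ℕ → ℝ := fun k => 2 * (2⁻¹:ℝ) ^ k * (Real.log 3 + Real.log 2 + L k) with hW
  have hlog3 : (0:ℝ) ≤ Real.log 3 := Real.log_nonneg (by norm_num)
  have hlog2 : (0:ℝ) ≤ Real.log 2 := Real.log_nonneg (by norm_num)
  have hW0 : ∀ k, 0 ≤ W k := by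
    intro k
    have := hL0 k
    have : (0:ℝ) ≤ Real.log 3 + Real.log 2 + L k := by linarith
    positivity
  have hWs : Summable W := by
    have h1 : Summable (fun k => (2 * (Real.log 3 + Real.log 2)) * (2⁻¹:ℝ) ^ k) :=
      (summable_geometric_of_lt_one (by norm_num) (by norm_num)).mul_left _
    have h2 : Summable (fun k => 2 * ((2⁻¹:ℝ) ^ k * L k)) := hLs.mul_left 2
    have := h1.add h2
    apply this.congr
    intro k
    simp only [hW]
    ring
  set T := ∑' k, W k with hT
  have hT0 : 0 ≤ T := tsum_nonneg hW0
  -- choose ε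
  have hφsmall : ∀ᶠ t in 𝓝 (1:ℝ), φ t < δ / (4 * (k₁ + 1)) := by
    have hlt : φ 1 < δ / (4 * (k₁ + 1)) := by
      rw [hφ1]; positivity
    exact (hφc.tendsto 1).eventually_lt_const hlt
  rw [Metric.eventually_nhds_iff] at hφsmall
  obtain ⟨ν, hν0, hν⟩ := hφsmall
  set ε := min (min 4⁻¹ (ν/4)) (δ/(4*(T+1))) with hε
  have hε0 : 0 < ε := by
    apply lt_min (lt_min (by norm_num) (by linarith))
    positivity
  have hε14 : ε ≤ 4⁻¹ := le_trans (min_le_left _ _) (min_le_left _ _)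
  have hεν : ε ≤ ν/4 := le_trans (min_le_left _ _) (min_le_right _ _)
  have hεT : ε ≤ δ/(4*(T+1)) := min_le_right _ _
  have hε1 : ε ≤ 1 := le_trans hε14 (by norm_num)
  -- define p
  set p : ℕ → ℝ := fun k => if k < k₁ then 0 else ε * (2⁻¹:ℝ) ^ k with hp
  have hp0 : ∀ k, 0 ≤ p k := by
    intro k
    rw [hp]
    dsimp only
    split
    · exact le_rfl
    · positivity
  have hple : ∀ k, p k ≤ ε * (2⁻¹:ℝ) ^ k := by
    intro k
    rw [hp]
    dsimp only
    split
    · positivity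
    · exact le_rfl
  have hgeo : Summable (fun k => ε * (2⁻¹:ℝ) ^ k) :=
    (summable_geometric_of_lt_one (by norm_num) (by norm_num)).mul_left ε
  have hps : Summable p := Summable.of_nonneg_of_le hp0 hple hgeo
  set m : ℝ := ∑' k, p k with hmdef
  have hm0 : 0 ≤ m := tsum_nonneg hp0
  have hm2ε : m ≤ 2 * ε := by
    have h1 : m ≤ ∑' k, ε * (2⁻¹:ℝ) ^ k := Summable.tsum_le_tsum hple hps hgeo
    have h2 : (∑' k, ε * (2⁻¹:ℝ) ^ k) = ε * 2 := by
      rw [tsum_mul_left, tsum_geometric_of_lt_one (by norm_num) (by norm_num)]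
      norm_num
    linarith
  have hm12 : m ≤ 2⁻¹ := by
    have : (2:ℝ) * ε ≤ 2 * 4⁻¹ := by linarith
    linarith
  have hm1 : m ≤ 1 := by linarith
  have h1m0 : (0:ℝ) ≤ 1 - m := by linarith
  have hφ1m : φ (1 - m) < δ / (4 * (k₁ + 1)) := by
    apply hν
    rw [Real.dist_eq]
    have : |1 - m - 1| = m := by
      rw [show (1:ℝ) - m - 1 = -m by ring, abs_neg, abs_of_nonneg hm0]
    rw [this]
    linarith
  have hφ1m0 : 0 ≤ φ (1 - m) := hφ0 _ h1m0
  have hp1 : ∀ k, p k ≤ 1 := by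
    intro k
    calc p k ≤ ε * (2⁻¹:ℝ) ^ k := hple k
      _ ≤ ε * 1 := by
          apply mul_le_mul_of_nonneg_left _ hε0.le
          exact pow_le_one₀ (by norm_num) (by norm_num)
      _ ≤ 1 := by linarith
  -- the series bound
  set F : ℕ → ℝ := fun k => Q k * φ (1 - m + p k / Q k) with hF
  have hF0 : ∀ k, 0 ≤ F k := by
    intro k
    apply mul_nonneg (hQ0 k)
    apply hφ0
    have : 0 ≤ p k / Q k := div_nonneg (hp0 k) (hQ0 k)
    linarith
  set G1 : ℕ → ℝ := fun k => if k < k₁ then φ (1 - m) else 0 with hG1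
  set G2 : ℕ → ℝ := fun k => if k < k₁ then 0 else
      (M + 2 * Real.log 3) * (S k₁ * (2⁻¹:ℝ) ^ (k - k₁)) with hG2
  set G3 : ℕ → ℝ := fun k => if k < k₁ then 0 else
      4 * (Real.sqrt (S k₁) * (Real.sqrt 2⁻¹) ^ (k - k₁)) with hG3
  set G4 : ℕ → ℝ := fun k => if k < k₁ then 0 else ε * W k with hG4
  have hFG : ∀ k, F k ≤ G1 k + G2 k + G3 k + G4 k := by
    intro k
    by_cases hk : k < k₁
    · have hpk : p k = 0 := by simp [hp, hk]
      have e1 : G1 k = φ (1 - m) := by simp [hG1, hk]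
      have e2 : G2 k = 0 := by simp [hG2, hk]
      have e3 : G3 k = 0 := by simp [hG3, hk]
      have e4 : G4 k = 0 := by simp [hG4, hk]
      have eF : F k = Q k * φ (1 - m) := by
        simp only [hF, hpk, zero_div, add_zero]
      rw [eF, e1, e2, e3, e4, add_zero, add_zero, add_zero]
      exact mul_le_of_le_one_left hφ1m0 (hQ1 k)
    · push_neg at hk
      have hkk : ¬ (k < k₁) := not_lt.mpr hk
      have hkK : K ≤ k := le_trans hk₁K hk
      have hQpos : 0 < Q k := lt_of_lt_of_le (by have := hSpos k; linarith) (hQhalf k hkK)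
      have hlogQb : Real.log (Q k)⁻¹ ≤ Real.log 2 + L k := by
        have h2 : S k / 2 ≤ Q k := hQhalf k hkK
        have hSk := hSpos k
        have h3 : (Q k)⁻¹ ≤ (S k / 2)⁻¹ := by gcongr <;> positivity
        rw [inv_div] at h3
        have h4 : (2:ℝ) / S k = 2 * (S k)⁻¹ := by field_simp
        rw [h4] at h3
        calc Real.log (Q k)⁻¹ ≤ Real.log (2 * (S k)⁻¹) :=
              Real.log_le_log (by positivity) h3
          _ = Real.log 2 + Real.log (S k)⁻¹ := Real.log_mul (by norm_num) (by positivity)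
          _ ≤ Real.log 2 + L k := by
              have := hLb k hkK
              simp only [hSdef] at this ⊢
              linarith
      have hterm := termA_bound (φ := φ) hM0 hbound (hQ1 k) hQpos (hp0 k) (hp1 k)
        hm0 hm1 (hL0 k) hlogQb
      have hQle : Q k ≤ S k₁ * (2⁻¹:ℝ) ^ (k - k₁) := by
        have h1 : Q k ≤ S k := by
          rw [hQS k]
          have := hSpos (k+1)
          linarith
        exact le_trans h1 (hSchain k₁ hk₁K k hk)
      have hsqle : Real.sqrt (Q k) ≤ Real.sqrt (S k₁) * (Real.sqrt 2⁻¹) ^ (k - k₁) := by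
        have h1 : Real.sqrt (Q k) ≤ Real.sqrt (S k₁ * (2⁻¹:ℝ) ^ (k - k₁)) :=
          Real.sqrt_le_sqrt hQle
        rwa [Real.sqrt_mul (hSpos k₁).le, sqrt_pow_eq (by norm_num : (0:ℝ) ≤ 2⁻¹)] at h1
      have e1 : G1 k = 0 := by simp [hG1, hkk]
      have e2 : G2 k = (M + 2 * Real.log 3) * (S k₁ * (2⁻¹:ℝ) ^ (k - k₁)) := by
        simp [hG2, hkk]
      have e3 : G3 k = 4 * (Real.sqrt (S k₁) * (Real.sqrt 2⁻¹) ^ (k - k₁)) := by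
        simp [hG3, hkk]
      have e4 : G4 k = ε * W k := by simp [hG4, hkk]
      have hWk : 2 * p k * (Real.log 3 + Real.log 2 + L k) = ε * W k := by
        have hpk : p k = ε * (2⁻¹:ℝ) ^ k := by simp [hp, hkk]
        rw [hpk, hW]
        ring
      have hMlog : (0:ℝ) ≤ M + 2 * Real.log 3 := by linarith
      have hb1 : (M + 2 * Real.log 3) * Q k
          ≤ (M + 2 * Real.log 3) * (S k₁ * (2⁻¹:ℝ) ^ (k - k₁)) :=
        mul_le_mul_of_nonneg_left hQle hMlog
      have hb2 : 4 * Real.sqrt (Q k) ≤ 4 * (Real.sqrt (S k₁) * (Real.sqrt 2⁻¹) ^ (k - k₁)) := by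
        linarith
      rw [e1, e2, e3, e4, zero_add]
      calc F k ≤ (M + 2 * Real.log 3) * Q k + 4 * Real.sqrt (Q k)
            + 2 * p k * (Real.log 3 + Real.log 2 + L k) := hterm
        _ ≤ (M + 2 * Real.log 3) * (S k₁ * (2⁻¹:ℝ) ^ (k - k₁))
            + 4 * (Real.sqrt (S k₁) * (Real.sqrt 2⁻¹) ^ (k - k₁)) + ε * W k := by
            rw [← hWk]
            linarith
  -- summability and sums of the G pieces
  have hG1s : Summable G1 := by
    apply summable_of_ne_finset_zero (s := Finset.range k₁)
    intro k hk
    simp only [hG1]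
    rw [if_neg (by simpa using hk)]
  have hG1sum : ∑' k, G1 k ≤ (k₁ : ℝ) * φ (1 - m) := by
    rw [tsum_eq_sum (s := Finset.range k₁) (fun k hk => by
      simp only [hG1]; rw [if_neg (by simpa using hk)])]
    calc (∑ k ∈ Finset.range k₁, G1 k) ≤ (Finset.range k₁).card • φ (1 - m) := by
          apply Finset.sum_le_card_nsmul
          intro k hk
          simp only [hG1]
          rw [if_pos (Finset.mem_range.mp hk)]
      _ = (k₁ : ℝ) * φ (1 - m) := by
          rw [Finset.card_range, nsmul_eq_mul]
  have hgeo2 : Summable (fun j : ℕ => (M + 2 * Real.log 3) * (S k₁ * (2⁻¹:ℝ) ^ j)) :=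
    (((summable_geometric_of_lt_one (by norm_num) (by norm_num))).mul_left (S k₁)).mul_left _
  obtain ⟨hG2s, hG2eq⟩ := tsum_shift k₁ hgeo2
  have hG2sum : ∑' k, G2 k ≤ (M + 2 * Real.log 3) * (2 * S k₁) := by
    rw [hG2]
    rw [hG2eq]
    rw [tsum_mul_left, tsum_mul_left, tsum_geometric_of_lt_one (by norm_num) (by norm_num)]
    have : ((1:ℝ) - 2⁻¹)⁻¹ = 2 := by norm_num
    rw [this]
    nlinarith [Real.log_nonneg (show (1:ℝ) ≤ 3 by norm_num), hSpos k₁, hM0]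
  set r : ℝ := Real.sqrt 2⁻¹ with hr
  have hr0 : 0 ≤ r := Real.sqrt_nonneg _
  have hr34 : r ≤ 3/4 := by
    rw [hr]
    calc Real.sqrt 2⁻¹ ≤ Real.sqrt (9/16) := Real.sqrt_le_sqrt (by norm_num)
      _ = 3/4 := by
          rw [show (9/16:ℝ) = (3/4)^2 by norm_num, Real.sqrt_sq (by norm_num)]
  have hr1 : r < 1 := lt_of_le_of_lt hr34 (by norm_num)
  have hgeo3 : Summable (fun j : ℕ => 4 * (Real.sqrt (S k₁) * r ^ j)) :=
    ((summable_geometric_of_lt_one hr0 hr1).mul_left (Real.sqrt (S k₁))).mul_left 4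
  obtain ⟨hG3s, hG3eq⟩ := tsum_shift k₁ hgeo3
  have hG3sum : ∑' k, G3 k ≤ 16 * Real.sqrt (S k₁) := by
    rw [hG3, hG3eq, tsum_mul_left, tsum_mul_left, tsum_geometric_of_lt_one hr0 hr1]
    have hinv : ((1:ℝ) - r)⁻¹ ≤ 4 := by
      rw [show (4:ℝ) = (4⁻¹)⁻¹ by norm_num]
      apply inv_anti₀ (by norm_num)
      linarith
    have hsq0 : 0 ≤ Real.sqrt (S k₁) := Real.sqrt_nonneg _
    nlinarith
  have hG40 : ∀ k, 0 ≤ G4 k := by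
    intro k
    simp only [hG4]
    split
    · exact le_rfl
    · exact mul_nonneg hε0.le (hW0 k)
  have hG4le : ∀ k, G4 k ≤ ε * W k := by
    intro k
    simp only [hG4]
    split
    · exact mul_nonneg hε0.le (hW0 k)
    · exact le_rfl
  have hεWs : Summable (fun k => ε * W k) := hWs.mul_left ε
  have hG4s : Summable G4 := Summable.of_nonneg_of_le hG40 hG4le hεWs
  have hG4sum : ∑' k, G4 k ≤ ε * T := by
    calc ∑' k, G4 k ≤ ∑' k, ε * W k := Summable.tsum_le_tsum hG4le hG4s hεWs
      _ = ε * T := by rw [tsum_mul_left, hT]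
  have hGs : Summable (fun k => G1 k + G2 k + G3 k + G4 k) :=
    ((hG1s.add hG2s).add hG3s).add hG4s
  have hFs : Summable F := Summable.of_nonneg_of_le hF0 hFG hGs
  have hFsum : ∑' k, F k ≤ (k₁ : ℝ) * φ (1 - m) + (M + 2 * Real.log 3) * (2 * S k₁)
      + 16 * Real.sqrt (S k₁) + ε * T := by
    have h1 : ∑' k, F k ≤ ∑' k, (G1 k + G2 k + G3 k + G4 k) := Summable.tsum_le_tsum hFG hFs hGs
    have h2 : ∑' k, (G1 k + G2 k + G3 k + G4 k)
        = (∑' k, G1 k) + (∑' k, G2 k) + (∑' k, G3 k) + (∑' k, G4 k) := by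
      rw [Summable.tsum_add ((hG1s.add hG2s).add hG3s) hG4s, Summable.tsum_add (hG1s.add hG2s) hG3s,
        Summable.tsum_add hG1s hG2s]
    rw [h2] at h1
    linarith
  have hdivmain : φ (1 - m) + ∑' k, F k ≤ δ := by
    have hterm1 : ((k₁ : ℝ) + 1) * φ (1 - m) ≤ δ / 4 := by
      have h0 : (0:ℝ) < (k₁ : ℝ) + 1 := by positivity
      have h1 : ((k₁ : ℝ) + 1) * φ (1 - m) ≤ ((k₁ : ℝ) + 1) * (δ / (4 * ((k₁:ℝ) + 1))) :=
        mul_le_mul_of_nonneg_left hφ1m.le h0.le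
      have h2 : ((k₁ : ℝ) + 1) * (δ / (4 * ((k₁:ℝ) + 1))) = δ / 4 := by
        field_simp
      linarith
    have hterm3 : ε * T ≤ δ / 4 := by
      have h1 : ε * T ≤ δ / (4 * (T + 1)) * T := mul_le_mul_of_nonneg_right hεT hT0
      have h2 : δ / (4 * (T + 1)) * T ≤ δ / 4 := by
        rw [div_mul_eq_mul_div, div_le_div_iff₀ (by positivity) (by norm_num)]
        nlinarith
      linarith
    have := hFsum
    nlinarith [hk₁ψ]
  have hmean : ¬ Summable (fun k => p k * 2 ^ k) := by
    intro hs
    have hlim := hs.tendsto_atTop_zero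
    have hevε : ∀ᶠ k in atTop, p k * 2 ^ k = ε := by
      filter_upwards [eventually_ge_atTop k₁] with k hk
      have hpk : p k = ε * (2⁻¹:ℝ) ^ k := by simp [hp, not_lt.mpr hk]
      rw [hpk, mul_assoc]
      have : (2⁻¹:ℝ) ^ k * 2 ^ k = 1 := by
        rw [← mul_pow]
        norm_num
      rw [this, mul_one]
    have hconst : Tendsto (fun _ : ℕ => ε) atTop (𝓝 (0:ℝ)) := by
      rwa [tendsto_congr' hevε] at hlim
    have := tendsto_nhds_unique hconst tendsto_const_nhds
    exact absurd this.symm hε0.ne'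
  have hq : ∀ k, p k ≠ 0 → μ (Ioc ((2:ℝ)^k) ((2:ℝ)^(k+1))) ≠ 0 := by
    intro k hpk
    have hk : k₁ ≤ k := by
      by_contra h
      exact hpk (by simp [hp, not_le.mp h])
    have hQpos : 0 < Q k :=
      lt_of_lt_of_le (by have := hSpos k; linarith) (hQhalf k (le_trans hk₁K hk))
    intro h0
    rw [hQdef] at hQpos
    simp only [h0, ENNReal.toReal_zero] at hQpos
    exact absurd hQpos (lt_irrefl 0)
  simp only [hF, hQdef, hmdef] at hFs hdivmain hm12
  exact master φ δ hφ0 μ p hp0 hps hm12 hq hmean hFs hdivmain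


/-- ratio bounds at dyadic points, with eventual positivity. -/
lemma seq_ratio' {f : ℝ → ℝ} (hpos : ∀ᶠ x in atTop, 0 < f x) {r l u : ℝ} (hl : l < r)
    (hu : r < u) (h : Tendsto (fun t : ℝ => f (t * 2) / f t) atTop (𝓝 r)) :
    ∃ K : ℕ, ∀ k ≥ K, (0 < f (2 ^ k)) ∧ l * f (2 ^ k) ≤ f (2 ^ (k + 1)) ∧
      f (2 ^ (k + 1)) ≤ u * f (2 ^ k) := by
  have hev : ∀ᶠ t in atTop, f (t * 2) / f t ∈ Ioo l u ∧ 0 < f t :=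
    (h.eventually (Ioo_mem_nhds hl hu)).and hpos
  rw [eventually_atTop] at hev
  obtain ⟨T, hT⟩ := hev
  have hpow : Tendsto (fun k : ℕ => (2:ℝ) ^ k) atTop atTop :=
    tendsto_pow_atTop_atTop_of_one_lt one_lt_two
  obtain ⟨K, hK⟩ := (hpow.eventually_ge_atTop T).exists_forall_of_atTop
  refine ⟨K, fun k hk => ?_⟩
  obtain ⟨h2, hfk⟩ := hT ((2:ℝ) ^ k) (hK k hk)
  have hmul : (2:ℝ) ^ k * 2 = 2 ^ (k + 1) := (pow_succ 2 k).symm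
  rw [hmul] at h2
  refine ⟨hfk, ?_, ?_⟩
  · have := h2.1
    rw [lt_div_iff₀ hfk] at this
    linarith
  · have := h2.2
    rw [div_lt_iff₀ hfk] at this
    linarith

lemma heavy_facts {μ : Measure ℝ} [IsProbabilityMeasure μ] {γ γ' : ℝ}
    (hγ1 : 1 < γ) (hγ' : γ < γ') (hpos : ∀ x, 0 < survival μ x) (h : HeavyTailed μ γ) :
    ∃ K : ℕ, (∀ k ≥ K, survival μ ((2:ℝ)^(k+1)) ≤ 2⁻¹ * survival μ ((2:ℝ)^k)) ∧
      (∀ k ≥ K, survival μ ((2:ℝ)^K) * ((2:ℝ) ^ (-γ') : ℝ)^(k-K) ≤ survival μ ((2:ℝ)^k)) := by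
  have hr := h 2 two_pos
  set r : ℝ := (2:ℝ) ^ (-γ) with hrdef
  have hrhalf : r < 2⁻¹ := by
    rw [hrdef, show ((2:ℝ)⁻¹) = (2:ℝ) ^ (-1 : ℝ) by
      rw [Real.rpow_neg_one]]
    exact Real.rpow_lt_rpow_of_exponent_lt one_lt_two (by linarith)
  have hl : (2:ℝ) ^ (-γ') < r := by
    rw [hrdef]
    exact Real.rpow_lt_rpow_of_exponent_lt one_lt_two (by linarith)
  set u : ℝ := (r + 2⁻¹)/2 with hu
  have hru : r < u := by rw [hu]; linarith
  have hu2 : u ≤ 2⁻¹ := by rw [hu]; linarith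
  have hl0 : (0:ℝ) ≤ (2:ℝ) ^ (-γ') := (Real.rpow_pos_of_pos two_pos _).le
  obtain ⟨K, hK⟩ := seq_ratio' (f := survival μ)
    (Filter.Eventually.of_forall hpos) hl hru hr
  refine ⟨K, fun k hk => ?_, fun k hk => ?_⟩
  · have h1 := (hK k hk).2.2
    have h2 := (hK k hk).1
    calc survival μ ((2:ℝ)^(k+1)) ≤ u * survival μ ((2:ℝ)^k) := h1
      _ ≤ 2⁻¹ * survival μ ((2:ℝ)^k) := mul_le_mul_of_nonneg_right hu2 h2.le
  · exact (chain_bounds hl0 (by rw [hu]; positivity)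
      (fun i hi => ⟨(hK i hi).2.1, (hK i hi).2.2⟩) k hk).1

lemma weibull_facts {μ : Measure ℝ} [IsProbabilityMeasure μ] {γ : ℝ}
    (hγ0 : 0 < γ) (hγ1 : γ < 1) (hpos : ∀ x, 0 < survival μ x) (h : WeibullTailed μ γ) :
    ∃ K : ℕ, (∀ k ≥ K, survival μ ((2:ℝ)^(k+1)) ≤ 2⁻¹ * survival μ ((2:ℝ)^k)) ∧
      (∀ k ≥ K, hazard μ ((2:ℝ)^k) ≤ hazard μ ((2:ℝ)^K) * ((2:ℝ) ^ ((1+γ)/2) : ℝ)^(k-K)) ∧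
      0 ≤ hazard μ ((2:ℝ)^K) := by
  have hr := h 2 two_pos
  set r : ℝ := (2:ℝ) ^ γ with hrdef
  have hr1 : 1 < r := by
    rw [hrdef, show (1:ℝ) = (2:ℝ) ^ (0:ℝ) by rw [Real.rpow_zero]]
    exact Real.rpow_lt_rpow_of_exponent_lt one_lt_two hγ0
  set l : ℝ := (1 + r)/2 with hldef
  have hl1 : 1 < l := by rw [hldef]; linarith
  have hlr : l < r := by rw [hldef]; linarith
  set u : ℝ := (2:ℝ) ^ ((1+γ)/2) with hudef
  have hru : r < u := by
    rw [hrdef, hudef]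
    exact Real.rpow_lt_rpow_of_exponent_lt one_lt_two (by linarith)
  have hΛpos : ∀ᶠ x in atTop, 0 < hazard μ x :=
    (hazard_tendsto_atTop hγ0 h hpos (fun x => hazard_nonneg x)).eventually_gt_atTop 0
  obtain ⟨K₀, hK₀⟩ := seq_ratio' hΛpos hlr hru hr
  -- also need hazard at dyadics to exceed log 2 / (l - 1)
  have hbig : ∀ᶠ k : ℕ in atTop, Real.log 2 / (l - 1) ≤ hazard μ ((2:ℝ)^k) := by
    have hpow : Tendsto (fun k : ℕ => (2:ℝ) ^ k) atTop atTop :=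
      tendsto_pow_atTop_atTop_of_one_lt one_lt_two
    exact ((hazard_tendsto_atTop hγ0 h hpos (fun x => hazard_nonneg x)).comp
      hpow).eventually_ge_atTop _
  obtain ⟨K₁, hK₁⟩ := eventually_atTop.mp hbig
  set K := max K₀ K₁ with hK
  have hKK₀ : K₀ ≤ K := le_max_left _ _
  have hKK₁ : K₁ ≤ K := le_max_right _ _
  refine ⟨K, fun k hk => ?_, fun k hk => ?_, hazard_nonneg _⟩
  · -- halving
    have h1 := (hK₀ k (le_trans hKK₀ hk)).2.1
    have h2 := (hK₀ k (le_trans hKK₀ hk)).1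
    have h3 := hK₁ k (le_trans hKK₁ hk)
    have hgap : Real.log 2 ≤ hazard μ ((2:ℝ)^(k+1)) - hazard μ ((2:ℝ)^k) := by
      have : Real.log 2 ≤ (l - 1) * hazard μ ((2:ℝ)^k) := by
        rw [← div_le_iff₀' (by linarith)]
        exact h3
      nlinarith
    rw [survival_eq_exp_neg_hazard hpos, survival_eq_exp_neg_hazard hpos]
    have : -(hazard μ ((2:ℝ)^(k+1))) ≤ -(hazard μ ((2:ℝ)^k)) - Real.log 2 := by linarith
    calc Real.exp (-(hazard μ ((2:ℝ)^(k+1))))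
        ≤ Real.exp (-(hazard μ ((2:ℝ)^k)) - Real.log 2) := Real.exp_le_exp.mpr this
      _ = 2⁻¹ * Real.exp (-(hazard μ ((2:ℝ)^k))) := by
          rw [Real.exp_sub, Real.exp_log two_pos]
          ring
  · -- upper chain for hazard
    have hchain := (chain_bounds (g := fun k => hazard μ ((2:ℝ)^k)) (K := K)
      (l := l) (u := u) (by linarith) (by rw [hudef]; positivity)
      (fun i hi => ⟨(hK₀ i (le_trans hKK₀ hi)).2.1, (hK₀ i (le_trans hKK₀ hi)).2.2⟩) k hk).2
    exact hchain

lemma summable_linear_geo (a b : ℝ) :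
    Summable (fun k : ℕ => (2⁻¹:ℝ)^k * (a + b * k)) := by
  have h1 : Summable (fun k : ℕ => a * (2⁻¹:ℝ)^k) :=
    (summable_geometric_of_lt_one (by norm_num) (by norm_num)).mul_left a
  have h2 : Summable (fun k : ℕ => (k:ℝ) * (2⁻¹:ℝ)^k) := by
    have := summable_pow_mul_geometric_of_norm_lt_one (R := ℝ) 1 (r := 2⁻¹)
      (by rw [Real.norm_eq_abs]; rw [abs_of_pos]; norm_num; norm_num)
    apply this.congr
    intro k
    rw [pow_one]
  have := h1.add (h2.mul_left b)
  apply this.congr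
  intro k
  ring

lemma pow_rpow_comm {x : ℝ} (hx : 0 ≤ x) (s : ℝ) (k : ℕ) :
    (x ^ k) ^ s = (x ^ s) ^ k := by
  rw [← Real.rpow_natCast x k, ← Real.rpow_mul hx, mul_comm, Real.rpow_mul hx,
    Real.rpow_natCast]

lemma termB_bound {φ : ℝ → ℝ} {M C ppl Q P m qlow : ℝ} (hM0 : 0 ≤ M) (hC0 : 0 ≤ C)
    (hppl : 1 ≤ ppl)
    (hbound : ∀ y : ℝ, 0 ≤ y → φ y ≤ M + C * y ^ ppl)
    (hQpos : 0 < Q) (hqlow : qlow ≤ Q) (hqlow0 : 0 < qlow)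
    (hp0 : 0 ≤ P) (hm0 : 0 ≤ m) (hm1 : m ≤ 1) :
    Q * φ (1 - m + P / Q) ≤ (M + C * (2:ℝ) ^ ppl) * Q
      + C * (2:ℝ) ^ ppl * (P ^ ppl * qlow ^ (1 - ppl)) := by
  have hc0 : 0 ≤ P / Q := div_nonneg hp0 hQpos.le
  set c := P / Q with hcdef
  have hy0 : (0:ℝ) ≤ 1 - m + c := by linarith
  have h1 := hbound _ hy0
  have h2p : (0:ℝ) ≤ (2:ℝ) ^ ppl := (Real.rpow_pos_of_pos two_pos _).le
  have hykey : (1 - m + c) ^ ppl ≤ (2:ℝ) ^ ppl * (1 + c ^ ppl) := by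
    have hstep : (1 - m + c) ^ ppl ≤ (1 + c) ^ ppl :=
      Real.rpow_le_rpow hy0 (by linarith) (by linarith)
    rcases le_total c 1 with hc1 | hc1
    · have h3 : (1 + c) ^ ppl ≤ (2:ℝ) ^ ppl :=
        Real.rpow_le_rpow (by linarith) (by linarith) (by linarith)
      have h4 : (0:ℝ) ≤ c ^ ppl := Real.rpow_nonneg hc0 _
      nlinarith
    · have h3 : (1 + c) ^ ppl ≤ (2 * c) ^ ppl :=
        Real.rpow_le_rpow (by linarith) (by linarith) (by linarith)
      have h4 : ((2:ℝ) * c) ^ ppl = 2 ^ ppl * c ^ ppl :=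
        Real.mul_rpow (by norm_num) hc0
      have h5 : (0:ℝ) ≤ c ^ ppl := Real.rpow_nonneg hc0 _
      nlinarith
  have hQc : Q * c ^ ppl = P ^ ppl * Q ^ (1 - ppl) := by
    rw [hcdef, Real.div_rpow hp0 hQpos.le]
    rw [Real.rpow_sub hQpos, Real.rpow_one]
    field_simp
  have hmono : Q ^ (1 - ppl) ≤ qlow ^ (1 - ppl) := by
    apply Real.rpow_le_rpow_of_nonpos hqlow0 hqlow (by linarith)
  calc Q * φ (1 - m + c) ≤ Q * (M + C * (1 - m + c) ^ ppl) :=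
        mul_le_mul_of_nonneg_left h1 hQpos.le
    _ ≤ Q * (M + C * ((2:ℝ) ^ ppl * (1 + c ^ ppl))) := by
        apply mul_le_mul_of_nonneg_left _ hQpos.le
        have := mul_le_mul_of_nonneg_left hykey hC0
        linarith
    _ = (M + C * (2:ℝ) ^ ppl) * Q + C * (2:ℝ) ^ ppl * (Q * c ^ ppl) := by ring
    _ ≤ (M + C * (2:ℝ) ^ ppl) * Q + C * (2:ℝ) ^ ppl * (P ^ ppl * qlow ^ (1 - ppl)) := by
        rw [hQc]
        have h5 : (0:ℝ) ≤ P ^ ppl := Real.rpow_nonneg hp0 ppl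
        have h6 : P ^ ppl * Q ^ (1 - ppl) ≤ P ^ ppl * qlow ^ (1 - ppl) :=
          mul_le_mul_of_nonneg_left hmono h5
        have h7 := mul_le_mul_of_nonneg_left h6 (mul_nonneg hC0 h2p)
        linarith

set_option maxHeartbeats 1000000 in
lemma caseB_common (φ : ℝ → ℝ) (δ : ℝ) (hδ : 0 < δ)
    (hφc : Continuous φ) (hφ1 : φ 1 = 0) (hφ0 : ∀ x : ℝ, 0 ≤ x → 0 ≤ φ x)
    (M C ppl : ℝ) (hM0 : 0 ≤ M) (hC0 : 0 ≤ C) (hppl : 1 ≤ ppl)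
    (hbound : ∀ y : ℝ, 0 ≤ y → φ y ≤ M + C * y ^ ppl)
    (μ : Measure ℝ) [IsProbabilityMeasure μ]
    (hpos : ∀ x, 0 < survival μ x)
    (K : ℕ)
    (hhalf : ∀ k ≥ K, survival μ ((2:ℝ) ^ (k+1)) ≤ 2⁻¹ * survival μ ((2:ℝ) ^ k))
    (c₂ θ : ℝ) (hc₂ : 0 < c₂) (hθ0 : 0 < θ)
    (hlow : ∀ k ≥ K, c₂ * θ ^ k ≤ survival μ ((2:ℝ) ^ k))
    (hρ : (2⁻¹:ℝ) ^ ppl * θ ^ (1 - ppl) < 1) :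
    ∃ P₁ ∈ phiBall φ δ μ, (∫⁻ z, ENNReal.ofReal (max z 0) ∂P₁) = ⊤ := by
  classical
  set S : ℕ → ℝ := fun k => survival μ ((2:ℝ) ^ k) with hSdef
  set Q : ℕ → ℝ := fun k => (μ (Ioc ((2:ℝ)^k) ((2:ℝ)^(k+1)))).toReal with hQdef
  have hQS : ∀ k, Q k = S k - S (k+1) := by
    intro k
    rw [hQdef, hSdef]
    exact Q_eq μ (pow_le_pow_right₀ one_le_two (Nat.le_succ k))
  have hSpos : ∀ k, 0 < S k := fun k => hpos _
  have hS1 : ∀ k, S k ≤ 1 := fun k => survival_le_one μ _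
  have hQhalf : ∀ k ≥ K, S k / 2 ≤ Q k := by
    intro k hk
    have := hhalf k hk
    rw [hQS k]
    simp only [hSdef] at this ⊢
    linarith
  have hQ1 : ∀ k, Q k ≤ 1 := by
    intro k
    rw [hQS k]
    have := hSpos (k+1)
    have := hS1 k
    linarith
  have hQ0 : ∀ k, 0 ≤ Q k := fun k => ENNReal.toReal_nonneg
  have hSchain : ∀ k₁ ≥ K, ∀ j ≥ k₁, S j ≤ S k₁ * 2⁻¹ ^ (j - k₁) := by
    intro k₁ hk j hj
    refine (chain_bounds (g := S) (K := k₁) (l := 0) (u := 2⁻¹) le_rfl (by norm_num)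
      (fun i hi => ⟨by simpa using (hSpos (i+1)).le, hhalf i (le_trans hk hi)⟩) j hj).2
  have hS0 : Tendsto S atTop (𝓝 0) :=
    tendsto_zero_of_halving (fun k => (hSpos k).le) hhalf
  set ρ : ℝ := (2⁻¹:ℝ) ^ ppl * θ ^ (1 - ppl) with hρdef
  have hρ0 : 0 ≤ ρ := by
    rw [hρdef]
    exact mul_nonneg (Real.rpow_nonneg (by norm_num) _) (Real.rpow_nonneg hθ0.le _)
  set Cb : ℝ := C * (2:ℝ) ^ ppl * (c₂/2) ^ (1 - ppl) with hCb
  have hCb0 : 0 ≤ Cb := by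
    rw [hCb]
    exact mul_nonneg (mul_nonneg hC0 (Real.rpow_nonneg (by norm_num) _))
      (Real.rpow_nonneg (by positivity) _)
  set W : ℕ → ℝ := fun k => Cb * ρ ^ k with hW
  have hW0 : ∀ k, 0 ≤ W k := fun k => mul_nonneg hCb0 (pow_nonneg hρ0 k)
  have hWs : Summable W := (summable_geometric_of_lt_one hρ0 hρ).mul_left Cb
  set T := ∑' k, W k with hT
  have hT0 : 0 ≤ T := tsum_nonneg hW0
  -- choose k₁
  have hψ : Tendsto (fun n => (M + C * (2:ℝ) ^ ppl) * (2 * S n)) atTop (𝓝 0) := by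
    have h1 := hS0.const_mul (2 * (M + C * (2:ℝ) ^ ppl))
    simp only [mul_zero] at h1
    convert h1 using 2 with n
    ring
  have hev : ∀ᶠ n in atTop, (M + C * (2:ℝ) ^ ppl) * (2 * S n) < δ/4 :=
    hψ.eventually_lt_const (by linarith)
  obtain ⟨k₁, hk₁⟩ := ((hev.and (eventually_ge_atTop K)).exists_forall_of_atTop)
  have hk₁K : K ≤ k₁ := (hk₁ k₁ le_rfl).2
  have hk₁ψ : (M + C * (2:ℝ) ^ ppl) * (2 * S k₁) < δ/4 := (hk₁ k₁ le_rfl).1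
  -- choose ε
  have hφsmall : ∀ᶠ t in 𝓝 (1:ℝ), φ t < δ / (4 * (k₁ + 1)) := by
    have hlt : φ 1 < δ / (4 * (k₁ + 1)) := by
      rw [hφ1]; positivity
    exact (hφc.tendsto 1).eventually_lt_const hlt
  rw [Metric.eventually_nhds_iff] at hφsmall
  obtain ⟨ν, hν0, hν⟩ := hφsmall
  set ε := min (min 4⁻¹ (ν/4)) (δ/(4*(T+1))) with hε
  have hε0 : 0 < ε := by
    apply lt_min (lt_min (by norm_num) (by linarith))
    positivity
  have hε14 : ε ≤ 4⁻¹ := le_trans (min_le_left _ _) (min_le_left _ _)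
  have hεν : ε ≤ ν/4 := le_trans (min_le_left _ _) (min_le_right _ _)
  have hεT : ε ≤ δ/(4*(T+1)) := min_le_right _ _
  have hε1 : ε ≤ 1 := le_trans hε14 (by norm_num)
  set p : ℕ → ℝ := fun k => if k < k₁ then 0 else ε * (2⁻¹:ℝ) ^ k with hp
  have hp0 : ∀ k, 0 ≤ p k := by
    intro k
    rw [hp]
    dsimp only
    split
    · exact le_rfl
    · positivity
  have hple : ∀ k, p k ≤ ε * (2⁻¹:ℝ) ^ k := by
    intro k
    rw [hp]
    dsimp only
    split
    · positivity
    · exact le_rfl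
  have hgeo : Summable (fun k => ε * (2⁻¹:ℝ) ^ k) :=
    (summable_geometric_of_lt_one (by norm_num) (by norm_num)).mul_left ε
  have hps : Summable p := Summable.of_nonneg_of_le hp0 hple hgeo
  set m : ℝ := ∑' k, p k with hmdef
  have hm0 : 0 ≤ m := tsum_nonneg hp0
  have hm2ε : m ≤ 2 * ε := by
    have h1 : m ≤ ∑' k, ε * (2⁻¹:ℝ) ^ k := Summable.tsum_le_tsum hple hps hgeo
    have h2 : (∑' k, ε * (2⁻¹:ℝ) ^ k) = ε * 2 := by
      rw [tsum_mul_left, tsum_geometric_of_lt_one (by norm_num) (by norm_num)]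
      norm_num
    linarith
  have hm12 : m ≤ 2⁻¹ := by
    have : (2:ℝ) * ε ≤ 2 * 4⁻¹ := by linarith
    linarith
  have hm1 : m ≤ 1 := by linarith
  have h1m0 : (0:ℝ) ≤ 1 - m := by linarith
  have hφ1m : φ (1 - m) < δ / (4 * (k₁ + 1)) := by
    apply hν
    rw [Real.dist_eq]
    have : |1 - m - 1| = m := by
      rw [show (1:ℝ) - m - 1 = -m by ring, abs_neg, abs_of_nonneg hm0]
    rw [this]
    linarith
  have hφ1m0 : 0 ≤ φ (1 - m) := hφ0 _ h1m0
  set F : ℕ → ℝ := fun k => Q k * φ (1 - m + p k / Q k) with hF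
  have hF0 : ∀ k, 0 ≤ F k := by
    intro k
    apply mul_nonneg (hQ0 k)
    apply hφ0
    have : 0 ≤ p k / Q k := div_nonneg (hp0 k) (hQ0 k)
    linarith
  set G1 : ℕ → ℝ := fun k => if k < k₁ then φ (1 - m) else 0 with hG1
  set G2 : ℕ → ℝ := fun k => if k < k₁ then 0 else
      (M + C * (2:ℝ) ^ ppl) * (S k₁ * (2⁻¹:ℝ) ^ (k - k₁)) with hG2
  set G4 : ℕ → ℝ := fun k => if k < k₁ then 0 else ε * W k with hG4
  have hFG : ∀ k, F k ≤ G1 k + G2 k + G4 k := by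
    intro k
    by_cases hk : k < k₁
    · have hpk : p k = 0 := by simp [hp, hk]
      have e1 : G1 k = φ (1 - m) := by simp [hG1, hk]
      have e2 : G2 k = 0 := by simp [hG2, hk]
      have e4 : G4 k = 0 := by simp [hG4, hk]
      have eF : F k = Q k * φ (1 - m) := by
        simp only [hF, hpk, zero_div, add_zero]
      rw [eF, e1, e2, e4, add_zero, add_zero]
      exact mul_le_of_le_one_left hφ1m0 (hQ1 k)
    · push_neg at hk
      have hkk : ¬ (k < k₁) := not_lt.mpr hk
      have hkK : K ≤ k := le_trans hk₁K hk
      have hQpos : 0 < Q k := lt_of_lt_of_le (by have := hSpos k; linarith) (hQhalf k hkK)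
      have hqlow0 : (0:ℝ) < c₂/2 * θ ^ k := by positivity
      have hqlow : c₂/2 * θ ^ k ≤ Q k := by
        have h1 := hlow k hkK
        have h2 := hQhalf k hkK
        simp only [hSdef] at h1 h2 ⊢
        nlinarith
      have hterm := termB_bound (φ := φ) hM0 hC0 hppl hbound hQpos hqlow hqlow0
        (hp0 k) hm0 hm1
      have hpk : p k = ε * (2⁻¹:ℝ) ^ k := by simp [hp, hkk]
      have hQle : Q k ≤ S k₁ * (2⁻¹:ℝ) ^ (k - k₁) := by
        have h1 : Q k ≤ S k := by
          rw [hQS k]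
          have := hSpos (k+1)
          linarith
        exact le_trans h1 (hSchain k₁ hk₁K k hk)
      have e1 : G1 k = 0 := by simp [hG1, hkk]
      have e2 : G2 k = (M + C * (2:ℝ) ^ ppl) * (S k₁ * (2⁻¹:ℝ) ^ (k - k₁)) := by
        simp [hG2, hkk]
      have e4 : G4 k = ε * W k := by simp [hG4, hkk]
      have h2p : (0:ℝ) ≤ (2:ℝ) ^ ppl := (Real.rpow_pos_of_pos two_pos _).le
      have hMC : (0:ℝ) ≤ M + C * (2:ℝ) ^ ppl := by nlinarith
      have hb1 : (M + C * (2:ℝ) ^ ppl) * Q k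
          ≤ (M + C * (2:ℝ) ^ ppl) * (S k₁ * (2⁻¹:ℝ) ^ (k - k₁)) :=
        mul_le_mul_of_nonneg_left hQle hMC
      -- the ε-side bound
      have hpterm : C * (2:ℝ) ^ ppl * ((p k) ^ ppl * (c₂/2 * θ ^ k) ^ (1 - ppl))
          ≤ ε * W k := by
        have hεp : (ε : ℝ) ^ ppl ≤ ε := by
          calc (ε : ℝ) ^ ppl ≤ ε ^ (1:ℝ) :=
                Real.rpow_le_rpow_of_exponent_ge hε0 hε1 hppl
            _ = ε := Real.rpow_one ε
        have h1 : (p k) ^ ppl = ε ^ ppl * ((2⁻¹:ℝ) ^ ppl) ^ k := by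
          rw [hpk, Real.mul_rpow hε0.le (by positivity), pow_rpow_comm (by norm_num) ppl k]
        have h2 : (c₂/2 * θ ^ k) ^ (1 - ppl)
            = (c₂/2) ^ (1 - ppl) * (θ ^ (1 - ppl)) ^ k := by
          rw [Real.mul_rpow (by positivity) (by positivity), pow_rpow_comm hθ0.le]
        rw [h1, h2, hW, hCb, hρdef]
        have hkey : ε ^ ppl * (((2⁻¹:ℝ) ^ ppl) ^ k * (θ ^ (1 - ppl)) ^ k)
            ≤ ε * ((2⁻¹:ℝ) ^ ppl * θ ^ (1 - ppl)) ^ k := by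
          rw [mul_pow]
          apply mul_le_mul_of_nonneg_right hεp
          exact mul_nonneg (pow_nonneg (Real.rpow_nonneg (by norm_num) _) _)
            (pow_nonneg (Real.rpow_nonneg hθ0.le _) _)
        calc C * (2:ℝ) ^ ppl * (ε ^ ppl * ((2⁻¹:ℝ) ^ ppl) ^ k
              * ((c₂/2) ^ (1 - ppl) * (θ ^ (1 - ppl)) ^ k))
            = (C * (2:ℝ) ^ ppl * (c₂/2) ^ (1 - ppl))
              * (ε ^ ppl * (((2⁻¹:ℝ) ^ ppl) ^ k * (θ ^ (1 - ppl)) ^ k)) := by ring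
          _ ≤ (C * (2:ℝ) ^ ppl * (c₂/2) ^ (1 - ppl))
              * (ε * ((2⁻¹:ℝ) ^ ppl * θ ^ (1 - ppl)) ^ k) := by
              apply mul_le_mul_of_nonneg_left hkey
              exact mul_nonneg (mul_nonneg hC0 h2p) (Real.rpow_nonneg (by positivity) _)
          _ = ε * (C * (2:ℝ) ^ ppl * (c₂/2) ^ (1 - ppl)
              * ((2⁻¹:ℝ) ^ ppl * θ ^ (1 - ppl)) ^ k) := by ring
      rw [e1, e2, e4, zero_add]
      calc F k ≤ (M + C * (2:ℝ) ^ ppl) * Q k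
            + C * (2:ℝ) ^ ppl * ((p k) ^ ppl * (c₂/2 * θ ^ k) ^ (1 - ppl)) := hterm
        _ ≤ (M + C * (2:ℝ) ^ ppl) * (S k₁ * (2⁻¹:ℝ) ^ (k - k₁)) + ε * W k := by
            linarith
  -- sums
  have hG1s : Summable G1 := by
    apply summable_of_ne_finset_zero (s := Finset.range k₁)
    intro k hk
    simp only [hG1]
    rw [if_neg (by simpa using hk)]
  have hG1sum : ∑' k, G1 k ≤ (k₁ : ℝ) * φ (1 - m) := by
    rw [tsum_eq_sum (s := Finset.range k₁) (fun k hk => by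
      simp only [hG1]; rw [if_neg (by simpa using hk)])]
    calc (∑ k ∈ Finset.range k₁, G1 k) ≤ (Finset.range k₁).card • φ (1 - m) := by
          apply Finset.sum_le_card_nsmul
          intro k hk
          simp only [hG1]
          rw [if_pos (Finset.mem_range.mp hk)]
      _ = (k₁ : ℝ) * φ (1 - m) := by
          rw [Finset.card_range, nsmul_eq_mul]
  have hgeo2 : Summable (fun j : ℕ => (M + C * (2:ℝ) ^ ppl) * (S k₁ * (2⁻¹:ℝ) ^ j)) :=
    (((summable_geometric_of_lt_one (by norm_num) (by norm_num))).mul_left (S k₁)).mul_left _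
  obtain ⟨hG2s, hG2eq⟩ := tsum_shift k₁ hgeo2
  have h2p : (0:ℝ) ≤ (2:ℝ) ^ ppl := (Real.rpow_pos_of_pos two_pos _).le
  have hMC : (0:ℝ) ≤ M + C * (2:ℝ) ^ ppl := by nlinarith
  have hG2sum : ∑' k, G2 k ≤ (M + C * (2:ℝ) ^ ppl) * (2 * S k₁) := by
    rw [hG2, hG2eq, tsum_mul_left, tsum_mul_left,
      tsum_geometric_of_lt_one (by norm_num) (by norm_num)]
    have : ((1:ℝ) - 2⁻¹)⁻¹ = 2 := by norm_num
    rw [this]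
    nlinarith [hSpos k₁]
  have hG40 : ∀ k, 0 ≤ G4 k := by
    intro k
    simp only [hG4]
    split
    · exact le_rfl
    · exact mul_nonneg hε0.le (hW0 k)
  have hG4le : ∀ k, G4 k ≤ ε * W k := by
    intro k
    simp only [hG4]
    split
    · exact mul_nonneg hε0.le (hW0 k)
    · exact le_rfl
  have hεWs : Summable (fun k => ε * W k) := hWs.mul_left ε
  have hG4s : Summable G4 := Summable.of_nonneg_of_le hG40 hG4le hεWs
  have hG4sum : ∑' k, G4 k ≤ ε * T := by
    calc ∑' k, G4 k ≤ ∑' k, ε * W k := Summable.tsum_le_tsum hG4le hG4s hεWs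
      _ = ε * T := by rw [tsum_mul_left, hT]
  have hGs : Summable (fun k => G1 k + G2 k + G4 k) := (hG1s.add hG2s).add hG4s
  have hFs : Summable F := Summable.of_nonneg_of_le hF0 hFG hGs
  have hFsum : ∑' k, F k ≤ (k₁ : ℝ) * φ (1 - m) + (M + C * (2:ℝ) ^ ppl) * (2 * S k₁)
      + ε * T := by
    have h1 : ∑' k, F k ≤ ∑' k, (G1 k + G2 k + G4 k) := Summable.tsum_le_tsum hFG hFs hGs
    have h2 : ∑' k, (G1 k + G2 k + G4 k)
        = (∑' k, G1 k) + (∑' k, G2 k) + (∑' k, G4 k) := by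
      rw [Summable.tsum_add (hG1s.add hG2s) hG4s, Summable.tsum_add hG1s hG2s]
    rw [h2] at h1
    linarith
  have hdivmain : φ (1 - m) + ∑' k, F k ≤ δ := by
    have hterm1 : ((k₁ : ℝ) + 1) * φ (1 - m) ≤ δ / 4 := by
      have h0 : (0:ℝ) < (k₁ : ℝ) + 1 := by positivity
      have h1 : ((k₁ : ℝ) + 1) * φ (1 - m) ≤ ((k₁ : ℝ) + 1) * (δ / (4 * ((k₁:ℝ) + 1))) :=
        mul_le_mul_of_nonneg_left hφ1m.le h0.le
      have h2 : ((k₁ : ℝ) + 1) * (δ / (4 * ((k₁:ℝ) + 1))) = δ / 4 := by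
        field_simp
      linarith
    have hterm3 : ε * T ≤ δ / 4 := by
      have h1 : ε * T ≤ δ / (4 * (T + 1)) * T := mul_le_mul_of_nonneg_right hεT hT0
      have h2 : δ / (4 * (T + 1)) * T ≤ δ / 4 := by
        rw [div_mul_eq_mul_div, div_le_div_iff₀ (by positivity) (by norm_num)]
        nlinarith
      linarith
    nlinarith [hk₁ψ, hFsum]
  have hmean : ¬ Summable (fun k => p k * 2 ^ k) := by
    intro hs
    have hlim := hs.tendsto_atTop_zero
    have hevε : ∀ᶠ k in atTop, p k * 2 ^ k = ε := by
      filter_upwards [eventually_ge_atTop k₁] with k hk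
      have hpk : p k = ε * (2⁻¹:ℝ) ^ k := by simp [hp, not_lt.mpr hk]
      rw [hpk, mul_assoc]
      have : (2⁻¹:ℝ) ^ k * 2 ^ k = 1 := by
        rw [← mul_pow]
        norm_num
      rw [this, mul_one]
    have hconst : Tendsto (fun _ : ℕ => ε) atTop (𝓝 (0:ℝ)) := by
      rwa [tendsto_congr' hevε] at hlim
    have := tendsto_nhds_unique hconst tendsto_const_nhds
    exact absurd this.symm hε0.ne'
  have hq : ∀ k, p k ≠ 0 → μ (Ioc ((2:ℝ)^k) ((2:ℝ)^(k+1))) ≠ 0 := by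
    intro k hpk
    have hk : k₁ ≤ k := by
      by_contra h
      exact hpk (by simp [hp, not_le.mp h])
    have hQpos : 0 < Q k :=
      lt_of_lt_of_le (by have := hSpos k; linarith) (hQhalf k (le_trans hk₁K hk))
    intro h0
    rw [hQdef] at hQpos
    simp only [h0, ENNReal.toReal_zero] at hQpos
    exact absurd hQpos (lt_irrefl 0)
  simp only [hF, hQdef, hmdef] at hFs hdivmain hm12
  exact master φ δ hφ0 μ p hp0 hps hm12 hq hmean hFs hdivmain

/-- contents of the φ-divergence ball, infinite-mean alternatives.
(a) If `φ(x) ~ x log x` and `P₀` is heavy-tailed with `γ > 1` or Weibull-type with `γ < 1`,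
the ball contains a distribution with infinite positive-part mean.
(b) If `φ ∈ RV(p)` with `p > 1` and `P₀` is heavy-tailed with `1 < γ < p/(p-1)`,
the same conclusion holds. -/
theorem phiBall_contains_infinite_mean
    (φ : ℝ → ℝ) (δ : ℝ) (hδ : 0 < δ) (hφ : PhiSmooth φ)
    (P₀ : Measure ℝ) [IsProbabilityMeasure P₀] :
    ((Tendsto (fun x : ℝ => φ x / (x * Real.log x)) atTop (𝓝 1)) →
      ∀ γ : ℝ, ((1 < γ ∧ HeavyTailed P₀ γ) ∨ (0 < γ ∧ γ < 1 ∧ WeibullTailed P₀ γ)) →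
      ∃ P₁ ∈ phiBall φ δ P₀, (∫⁻ z, ENNReal.ofReal (max z 0) ∂P₁) = ⊤) ∧
    (∀ p γ : ℝ, 1 < p → RegVary φ p → 1 < γ → γ < p / (p - 1) → HeavyTailed P₀ γ →
      ∃ P₁ ∈ phiBall φ δ P₀, (∫⁻ z, ENNReal.ofReal (max z 0) ∂P₁) = ⊤) := by
  have hφc : Continuous φ := hφ.diff1.continuous
  constructor
  · intro hxlog γ hcase
    obtain ⟨M, hM0, hbound⟩ := phiA_bound hφc hxlog
    rcases hcase with ⟨hγ1, hheavy⟩ | ⟨hγ0, hγ1, hweib⟩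
    · -- heavy-tailed, γ > 1
      have hpos : ∀ x, 0 < survival P₀ x := survival_pos_of_heavy hheavy
      obtain ⟨K, hhalf, hlowchain⟩ :=
        heavy_facts hγ1 (show γ < γ + 1 by linarith) hpos hheavy
      set θ : ℝ := (2:ℝ) ^ (-(γ+1)) with hθdef
      have hθ0 : 0 < θ := Real.rpow_pos_of_pos two_pos _
      have hθ1 : θ ≤ 1 := by
        rw [hθdef]
        calc (2:ℝ) ^ (-(γ+1)) ≤ (2:ℝ) ^ (0:ℝ) :=
              Real.rpow_le_rpow_of_exponent_le one_le_two (by linarith)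
          _ = 1 := Real.rpow_zero 2
      set a : ℝ := Real.log (survival P₀ ((2:ℝ)^K))⁻¹ with ha
      set b : ℝ := (γ + 1) * Real.log 2 with hb
      have ha0 : 0 ≤ a := by
        rw [ha]
        apply Real.log_nonneg
        rw [one_le_inv_iff₀]
        exact ⟨hpos _, survival_le_one P₀ _⟩
      have hb0 : 0 ≤ b := by
        rw [hb]
        have := Real.log_nonneg (show (1:ℝ) ≤ 2 by norm_num)
        nlinarith
      have hlogθ : Real.log θ⁻¹ = b := by
        rw [Real.log_inv, hθdef, Real.log_rpow two_pos, hb]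
        ring
      refine caseA_common φ δ hδ hφc hφ.at_one hφ.nonneg M hM0 hbound P₀ hpos K hhalf
        (fun k => a + b * k) (fun k => by positivity) ?_ ?_
      · intro k hk
        have h1 := hlowchain k hk
        have hSK := hpos ((2:ℝ)^K)
        have hSk := hpos ((2:ℝ)^k)
        have h2 : Real.log (survival P₀ ((2:ℝ)^k))⁻¹
            ≤ Real.log (survival P₀ ((2:ℝ)^K) * θ^(k-K))⁻¹ := by
          apply Real.log_le_log (by positivity)
          apply inv_anti₀ (by positivity)
          exact h1
        have h3 : Real.log (survival P₀ ((2:ℝ)^K) * θ^(k-K))⁻¹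
            = a + (k - K : ℕ) * Real.log θ⁻¹ := by
          rw [mul_inv, Real.log_mul (by positivity) (by positivity), ha, ← inv_pow,
            Real.log_pow]
        rw [h3, hlogθ] at h2
        have h4 : ((k - K : ℕ) : ℝ) ≤ (k : ℝ) := by
          exact_mod_cast Nat.cast_le.mpr (Nat.sub_le k K)
        calc Real.log (survival P₀ ((2:ℝ)^k))⁻¹ ≤ a + (k - K : ℕ) * b := h2
          _ ≤ a + b * k := by nlinarith
      · exact summable_linear_geo a b
    · -- Weibull, 0 < γ < 1
      have hpos : ∀ x, 0 < survival P₀ x := survival_pos_of_weibull hγ0 hweib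
      obtain ⟨K, hhalf, hhaz, hhaz0⟩ := weibull_facts hγ0 hγ1 hpos hweib
      set u : ℝ := (2:ℝ) ^ ((1+γ)/2) with hu
      have hu1 : 1 ≤ u := by
        rw [hu]
        calc (1:ℝ) = (2:ℝ) ^ (0:ℝ) := (Real.rpow_zero 2).symm
          _ ≤ (2:ℝ) ^ ((1+γ)/2) :=
              Real.rpow_le_rpow_of_exponent_le one_le_two (by linarith)
      set Λ : ℝ := hazard P₀ ((2:ℝ)^K) with hΛ
      refine caseA_common φ δ hδ hφc hφ.at_one hφ.nonneg M hM0 hbound P₀ hpos K hhalf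
        (fun k => Λ * u ^ k) (fun k => by positivity) ?_ ?_
      · intro k hk
        have heq : Real.log (survival P₀ ((2:ℝ)^k))⁻¹ = hazard P₀ ((2:ℝ)^k) := by
          rw [survival_eq_exp_neg_hazard hpos, Real.exp_neg, inv_inv, Real.log_exp]
        rw [heq]
        calc hazard P₀ ((2:ℝ)^k) ≤ Λ * u ^ (k - K) := hhaz k hk
          _ ≤ Λ * u ^ k := by
              apply mul_le_mul_of_nonneg_left _ hhaz0
              exact pow_le_pow_right₀ hu1 (Nat.sub_le k K)
      · have hratio : (2⁻¹:ℝ) * u < 1 := by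
          rw [hu]
          have : (2⁻¹:ℝ) = (2:ℝ) ^ (-1:ℝ) := by
            rw [Real.rpow_neg_one]
          rw [this, ← Real.rpow_add two_pos]
          apply Real.rpow_lt_one_of_one_lt_of_neg one_lt_two
          linarith
        have hratio0 : (0:ℝ) ≤ 2⁻¹ * u := by positivity
        have := (summable_geometric_of_lt_one hratio0 hratio).mul_left Λ
        apply this.congr
        intro k
        rw [mul_pow]
        ring
  · intro pp γ hp1 hrv hγ1 hγp hheavy
    have hpos : ∀ x, 0 < survival P₀ x := survival_pos_of_heavy hheavy
    have hpp0 : 0 < pp - 1 := by linarith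
    set γ' : ℝ := (γ + pp/(pp-1))/2 with hγ'def
    have hγγ' : γ < γ' := by rw [hγ'def]; linarith
    have hγ'1 : 1 < γ' := lt_trans hγ1 hγγ'
    have hγ'p : γ' < pp/(pp-1) := by rw [hγ'def]; linarith
    have hγ'10 : 0 < γ' - 1 := by linarith
    have hppg : pp < γ'/(γ'-1) := by
      rw [lt_div_iff₀ hγ'10]
      have h1 : γ' * (pp - 1) < pp := by
        have := (lt_div_iff₀ hpp0).mp hγ'p
        linarith [this]
      nlinarith
    set ppl : ℝ := (pp + γ'/(γ'-1))/2 with hppldef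
    have hppppl : pp < ppl := by rw [hppldef]; linarith
    have hppl1 : 1 ≤ ppl := by linarith
    have hppl0 : 0 < ppl := by linarith
    have hpplg : ppl < γ'/(γ'-1) := by rw [hppldef]; linarith
    have hkey : γ' * (ppl - 1) < ppl := by
      have := (lt_div_iff₀ hγ'10).mp hpplg
      nlinarith
    have hr1 : (1:ℝ) < (2:ℝ) ^ pp :=
      Real.one_lt_rpow_iff_of_pos two_pos |>.mpr (Or.inl ⟨one_lt_two, by linarith⟩)
    have hru : (2:ℝ) ^ pp < (2:ℝ) ^ ppl :=
      Real.rpow_lt_rpow_of_exponent_lt one_lt_two hppppl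
    obtain ⟨M, hM0, C, hC0, hbound⟩ := phiB_bound hφc hφ.convex hφ.superlinear hppl0
      hr1 hru (hrv 2 two_pos)
    obtain ⟨K, hhalf, hlowchain⟩ := heavy_facts hγ1 hγγ' hpos hheavy
    set θ : ℝ := (2:ℝ) ^ (-γ') with hθdef
    have hθ0 : 0 < θ := Real.rpow_pos_of_pos two_pos _
    set c₂ : ℝ := survival P₀ ((2:ℝ)^K) / θ ^ K with hc₂def
    have hc₂0 : 0 < c₂ := by
      rw [hc₂def]
      exact div_pos (hpos _) (pow_pos hθ0 K)
    have hlow : ∀ k ≥ K, c₂ * θ ^ k ≤ survival P₀ ((2:ℝ)^k) := by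
      intro k hk
      have h1 := hlowchain k hk
      have h2 : θ ^ (k - K) = θ ^ k / θ ^ K := pow_sub₀ θ hθ0.ne' hk
      rw [h2] at h1
      calc c₂ * θ ^ k = survival P₀ ((2:ℝ)^K) * (θ ^ k / θ ^ K) := by
            rw [hc₂def]; ring
        _ ≤ survival P₀ ((2:ℝ)^k) := h1
    have hρ : (2⁻¹:ℝ) ^ ppl * θ ^ (1 - ppl) < 1 := by
      have h1 : (2⁻¹:ℝ) ^ ppl = (2:ℝ) ^ (-ppl) := by
        rw [show (2⁻¹:ℝ) = (2:ℝ) ^ (-1:ℝ) by rw [Real.rpow_neg_one],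
          ← Real.rpow_mul (by norm_num)]
        norm_num
      have h2 : θ ^ (1 - ppl) = (2:ℝ) ^ (-γ' * (1 - ppl)) := by
        rw [hθdef, ← Real.rpow_mul (by norm_num)]
      rw [h1, h2, ← Real.rpow_add two_pos]
      apply Real.rpow_lt_one_of_one_lt_of_neg one_lt_two
      nlinarith
    exact caseB_common φ δ hδ hφc hφ.at_one hφ.nonneg M C ppl hM0 hC0 hppl1 hbound P₀
      hpos K hhalf c₂ θ hc₂0 hθ0 hlow hρ


end
end
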